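/- arXiv:2306.00727 — 9 statements merged into one kernel-verified Lean document; each statement's English description precedes it below -/
import Mathlib

section
/- For any metric space Z, the function d(c,c') = ∫_ℝ d_Z(c(t),c'(t)) / (2 e^{|t|}) dt defines a metric on the set of generalized geodesics in Z (continuous maps c : ℝ → Z that restrict to an isometric embedding on some closed interval and are locally constant on its complement), provided Z is nonempty; in particular the integral is always finite. -/
open MeasureTheory Real Set

/-- A generalized geodesic in a metric space `Z`: a continuous map `c : ℝ → Z` whose
restriction to some interval (of the form `[a,b]`, `[a,∞)`, `(−∞,b]` or `ℝ`) is an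
isometric embedding and which is locally constant on the complement of this interval. -/
def IsGenGeodesic {Z : Type*} [MetricSpace Z] (c : ℝ → Z) : Prop :=
  Continuous c ∧
  ∃ I : Set ℝ,
    ((∃ a b : ℝ, a ≤ b ∧ I = Set.Icc a b) ∨ (∃ a : ℝ, I = Set.Ici a) ∨
      (∃ b : ℝ, I = Set.Iic b) ∨ I = Set.univ) ∧
    (∀ s ∈ I, ∀ t ∈ I, dist (c s) (c t) = |s - t|) ∧
    (∀ t ∉ I, ∃ ε > 0, ∀ s : ℝ, |s - t| < ε → c s = c t)

/-- Locally constant to the right of `b` implies constant there. -/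
lemma genGeo_const_right {Z : Type*} [MetricSpace Z] {c : ℝ → Z} (hc : Continuous c)
    {b : ℝ} (h : ∀ t, b < t → ∃ ε > 0, ∀ s : ℝ, |s - t| < ε → c s = c t) :
    ∀ t, b ≤ t → c t = c b := by
  intro t ht
  rcases eq_or_lt_of_le ht with rfl | ht
  · rfl
  set S : Set ℝ := {u | u ∈ Icc b t ∧ c u = c t} with hS
  have htS : t ∈ S := ⟨⟨le_of_lt ht, le_rfl⟩, rfl⟩
  have hbdd : BddBelow S := ⟨b, fun u hu => hu.1.1⟩
  have hne : S.Nonempty := ⟨t, htS⟩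
  set m := sInf S with hm
  have hSclosed : IsClosed S := by
    have : S = Icc b t ∩ c ⁻¹' {c t} := by
      ext u; simp [hS, Set.mem_inter_iff]
    rw [this]
    exact isClosed_Icc.inter (IsClosed.preimage hc isClosed_singleton)
  have hmS : m ∈ S := hSclosed.csInf_mem hne hbdd
  have hbm : b ≤ m := hmS.1.1
  rcases eq_or_lt_of_le hbm with hbm' | hbm'
  · rw [← hbm'] at hmS; exact hmS.2.symm ▸ rfl
  · exfalso
    obtain ⟨ε, hε, hconst⟩ := h m hbm'
    set u := max b (m - ε / 2) with hu
    have hum : u < m := by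
      apply max_lt hbm'
      linarith
    have huS : u ∈ S := by
      refine ⟨⟨le_max_left _ _, le_trans (le_of_lt hum) hmS.1.2⟩, ?_⟩
      have : |u - m| < ε := by
        rw [abs_of_nonpos (by linarith)]
        have : m - ε / 2 ≤ u := le_max_right _ _
        linarith
      rw [hconst u this, hmS.2]
    exact absurd (csInf_le hbdd huS) (not_le.mpr hum)

lemma genGeo_const_left {Z : Type*} [MetricSpace Z] {c : ℝ → Z} (hc : Continuous c)
    {a : ℝ} (h : ∀ t, t < a → ∃ ε > 0, ∀ s : ℝ, |s - t| < ε → c s = c t) :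
    ∀ t, t ≤ a → c t = c a := by
  have := genGeo_const_right (c := fun x => c (-x)) (hc.comp continuous_neg)
    (b := -a) ?_
  · intro t ht
    have := this (-t) (by linarith)
    simpa using this
  · intro t ht
    obtain ⟨ε, hε, hconst⟩ := h (-t) (by linarith)
    exact ⟨ε, hε, fun s hs => hconst (-s) (by rw [show -s - -t = -(s - t) by ring, abs_neg]; exact hs)⟩

/-- Generalized geodesics are 1-Lipschitz. -/
lemma genGeo_dist_le {Z : Type*} [MetricSpace Z] {c : ℝ → Z} (h : IsGenGeodesic c) :
    ∀ s t : ℝ, dist (c s) (c t) ≤ |s - t| := by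
  obtain ⟨hc, I, hI, hiso, hloc⟩ := h
  have key : ∀ (p : ℝ → ℝ), (∀ t, c t = c (p t)) → (∀ t, p t ∈ I) →
      (∀ s t, |p s - p t| ≤ |s - t|) → ∀ s t, dist (c s) (c t) ≤ |s - t| := by
    intro p hpc hpI hpl s t
    rw [hpc s, hpc t, hiso _ (hpI s) _ (hpI t)]
    exact hpl s t
  rcases hI with ⟨a, b, hab, rfl⟩ | ⟨a, rfl⟩ | ⟨b, rfl⟩ | rfl
  · -- Icc a b
    have hR : ∀ t, b ≤ t → c t = c b :=
      genGeo_const_right hc (fun t ht => hloc t (fun hmem => absurd hmem.2 (not_le.mpr ht)))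
    have hL : ∀ t, t ≤ a → c t = c a :=
      genGeo_const_left hc (fun t ht => hloc t (fun hmem => absurd hmem.1 (not_le.mpr ht)))
    refine key (fun t => max a (min t b)) ?_ ?_ ?_
    · intro t
      rcases le_total t a with h1 | h1
      · rw [hL t h1]
        congr 1
        rw [min_eq_left (le_trans h1 hab), max_eq_left h1]
      · rcases le_total t b with h2 | h2
        · rw [min_eq_left h2, max_eq_right h1]
        · rw [hR t h2, min_eq_right h2, max_eq_right hab]
    · intro t
      exact ⟨le_max_left _ _, max_le hab (min_le_right _ _)⟩
    · intro s t
      calc |max a (min s b) - max a (min t b)| = |max (min s b) a - max (min t b) a| := by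
            rw [max_comm a, max_comm a]
        _ ≤ |min s b - min t b| := abs_max_sub_max_le_abs _ _ _
        _ ≤ max |s - t| |b - b| := abs_min_sub_min_le_max _ _ _ _
        _ ≤ |s - t| := by simp
  · -- Ici a
    have hL : ∀ t, t ≤ a → c t = c a :=
      genGeo_const_left hc (fun t ht => hloc t (not_le.mpr ht))
    refine key (fun t => max a t) ?_ ?_ ?_
    · intro t
      rcases le_total t a with h1 | h1
      · rw [hL t h1, max_eq_left h1]
      · rw [max_eq_right h1]
    · intro t; exact Set.mem_Ici.mpr (le_max_left a t)
    · intro s t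
      calc |max a s - max a t| = |max s a - max t a| := by rw [max_comm a, max_comm a]
        _ ≤ |s - t| := abs_max_sub_max_le_abs _ _ _
  · -- Iic b
    have hR : ∀ t, b ≤ t → c t = c b :=
      genGeo_const_right hc (fun t ht => hloc t (not_le.mpr ht))
    refine key (fun t => min t b) ?_ ?_ ?_
    · intro t
      rcases le_total t b with h1 | h1
      · rw [min_eq_left h1]
      · rw [hR t h1, min_eq_right h1]
    · intro t; exact Set.mem_Iic.mpr (min_le_right t b)
    · intro s t
      calc |min s b - min t b| ≤ max |s - t| |b - b| := abs_min_sub_min_le_max _ _ _ _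
        _ ≤ |s - t| := by simp
  · exact key id (fun t => rfl) (fun t => mem_univ t) (fun s t => le_rfl)

lemma integrable_exp_neg_half_abs : Integrable fun t : ℝ => Real.exp (-(1/2) * |t|) := by
  rw [← integrableOn_univ, ← @Iio_union_Ici _ _ (0 : ℝ), integrableOn_union,
    integrableOn_Ici_iff_integrableOn_Ioi]
  constructor
  · rw [← (Measure.measurePreserving_neg (volume : Measure ℝ)).integrableOn_comp_preimage
        (Homeomorph.neg ℝ).measurableEmbedding]
    simp only [Function.comp_def, abs_neg, neg_preimage, neg_Iio, neg_neg, neg_zero]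
    apply (exp_neg_integrableOn_Ioi 0 (by norm_num : (0:ℝ) < 1/2)).congr_fun ?_ measurableSet_Ioi
    intro x hx
    simp [abs_of_nonneg (le_of_lt (mem_Ioi.mp hx))]
  · apply (exp_neg_integrableOn_Ioi 0 (by norm_num : (0:ℝ) < 1/2)).congr_fun ?_ measurableSet_Ioi
    intro x hx
    simp [abs_of_nonneg (le_of_lt (mem_Ioi.mp hx))]

/-- The distance on the space of generalized geodesics. -/
noncomputable def dFS {Z : Type*} [MetricSpace Z] (c c' : ℝ → Z) : ℝ :=
  ∫ t : ℝ, dist (c t) (c' t) / (2 * Real.exp |t|)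

lemma genGeo_integrable {Z : Type*} [MetricSpace Z] {c c' : ℝ → Z}
    (h : IsGenGeodesic c) (h' : IsGenGeodesic c') :
    Integrable (fun t : ℝ => dist (c t) (c' t) / (2 * Real.exp |t|)) := by
  have hc := h.1
  have hc' := h'.1
  have hcont : Continuous fun t : ℝ => dist (c t) (c' t) / (2 * Real.exp |t|) :=
    (hc.dist hc').div (continuous_const.mul (Real.continuous_exp.comp continuous_abs))
      (fun t => by positivity)
  set D := dist (c 0) (c' 0) with hD'
  have hD : 0 ≤ D := dist_nonneg
  refine (integrable_exp_neg_half_abs.const_mul (4 + D)).mono' hcont.aestronglyMeasurable ?_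
  filter_upwards with t
  rw [Real.norm_eq_abs, abs_of_nonneg (by positivity)]
  have h1 : dist (c t) (c' t) ≤ 2 * |t| + D := by
    calc dist (c t) (c' t) ≤ dist (c t) (c 0) + dist (c 0) (c' 0) + dist (c' 0) (c' t) :=
          dist_triangle4 _ _ _ _
      _ ≤ |t - 0| + D + |0 - t| := by
          gcongr
          · exact genGeo_dist_le h t 0
          · exact genGeo_dist_le h' 0 t
      _ = 2 * |t| + D := by rw [sub_zero, zero_sub, abs_neg]; ring
  have hx : (0:ℝ) ≤ |t| := abs_nonneg t
  have h2 : (1/2) * |t| + 1 ≤ Real.exp ((1/2) * |t|) := Real.add_one_le_exp _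
  have he : Real.exp (-(1/2) * |t|) * (2 * Real.exp |t|) = 2 * Real.exp ((1/2) * |t|) := by
    rw [show Real.exp (-(1/2) * |t|) * (2 * Real.exp |t|)
        = 2 * (Real.exp (-(1/2) * |t|) * Real.exp |t|) by ring, ← Real.exp_add]
    congr 1
    ring
  rw [div_le_iff₀ (by positivity)]
  calc dist (c t) (c' t) ≤ 2 * |t| + D := h1
    _ ≤ (4 + D) * Real.exp (-(1/2) * |t|) * (2 * Real.exp |t|) := by
        rw [mul_assoc, he]
        nlinarith [h2, hD, hx]

/-- `dFS` defines a metric on the set of generalized geodesics; in particular the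
integrand is always integrable. -/
theorem dFS_is_metric {Z : Type*} [MetricSpace Z] [Nonempty Z] :
    (∀ c c' : ℝ → Z, IsGenGeodesic c → IsGenGeodesic c' →
      Integrable (fun t : ℝ => dist (c t) (c' t) / (2 * Real.exp |t|))) ∧
    (∀ c c' : ℝ → Z, IsGenGeodesic c → IsGenGeodesic c' → 0 ≤ dFS c c') ∧
    (∀ c : ℝ → Z, IsGenGeodesic c → dFS c c = 0) ∧
    (∀ c c' : ℝ → Z, IsGenGeodesic c → IsGenGeodesic c' → dFS c c' = dFS c' c) ∧
    (∀ c c' : ℝ → Z, IsGenGeodesic c → IsGenGeodesic c' → dFS c c' = 0 → c = c') ∧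
    (∀ c c' c'' : ℝ → Z, IsGenGeodesic c → IsGenGeodesic c' → IsGenGeodesic c'' →
      dFS c c'' ≤ dFS c c' + dFS c' c'') := by
  refine ⟨fun c c' h h' => genGeo_integrable h h', ?_, ?_, ?_, ?_, ?_⟩
  · intro c c' h h'
    exact integral_nonneg fun t => by positivity
  · intro c h
    simp [dFS]
  · intro c c' h h'
    simp only [dFS, dist_comm]
  · intro c c' h h' h0
    have hint := genGeo_integrable h h'
    have hnn : (0 : ℝ → ℝ) ≤ fun t => dist (c t) (c' t) / (2 * Real.exp |t|) :=
      fun t => by positivity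
    have hae := (integral_eq_zero_iff_of_nonneg hnn hint).mp h0
    have hcont : Continuous fun t : ℝ => dist (c t) (c' t) / (2 * Real.exp |t|) :=
      (h.1.dist h'.1).div (continuous_const.mul (Real.continuous_exp.comp continuous_abs))
        (fun t => by positivity)
    have heq : (fun t : ℝ => dist (c t) (c' t) / (2 * Real.exp |t|)) = 0 :=
      (hcont.ae_eq_iff_eq volume continuous_const).mp hae
    funext t
    have ht := congrFun heq t
    simp only [Pi.zero_apply, div_eq_zero_iff] at ht
    rcases ht with ht | ht
    · exact dist_eq_zero.mp ht
    · exact absurd ht (by positivity)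
  · intro c c' c'' h h' h''
    have h1 := genGeo_integrable h h'
    have h2 := genGeo_integrable h' h''
    unfold dFS
    rw [← integral_add h1 h2]
    refine integral_mono (genGeo_integrable h h'') (h1.add h2) fun t => ?_
    simp only [Pi.add_apply]
    rw [← add_div]
    gcongr
    exact dist_triangle _ _ _
end

section
/- Let FS(Z) be the space of generalized geodesics of a metric space Z with the metric d_FS(c,c') = ∫_ℝ d_Z(c(t),c'(t)) / (2 e^{|t|}) dt, and let Φ_τ(c)(t) = c(t+τ) be the flow. Then for all generalized geodesics c, d and all real τ, σ one has d_FS(Φ_τ(c), Φ_σ(d)) ≤ e^{|τ|} · d_FS(c,d) + |σ − τ|. -/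
open MeasureTheory

/-- The flow on the space of generalized geodesics. -/
def flowFS {Z : Type*} [MetricSpace Z] (c : ℝ → Z) (τ : ℝ) : ℝ → Z := fun t => c (t + τ)


open Real Set

section Aux


variable {Z : Type*} [MetricSpace Z]

lemma reach_right {f : ℝ → Z} (hf : Continuous f) {s a : ℝ} (hsa : s ≤ a)
    (h : ∀ u, s ≤ u → u < a → ∃ ε > 0, ∀ v : ℝ, |v - u| < ε → f v = f u) :
    f a = f s := by
  set S : Set ℝ := Icc s a ∩ f ⁻¹' {f s} with hS
  have hclosed : IsClosed S := isClosed_Icc.inter (isClosed_singleton.preimage hf)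
  have hne : S.Nonempty := ⟨s, ⟨le_refl s, hsa⟩, rfl⟩
  have hbdd : BddAbove S := ⟨a, fun x hx => hx.1.2⟩
  have hmem := hclosed.csSup_mem hne hbdd
  obtain ⟨⟨hsm, hma⟩, hfm⟩ := hmem
  have hfm' : f (sSup S) = f s := hfm
  rcases eq_or_lt_of_le hma with heq | hlt
  · rw [← heq]; exact hfm'
  · obtain ⟨ε, hε, hconst⟩ := h _ hsm hlt
    set v : ℝ := min (sSup S + ε / 2) ((sSup S + a) / 2) with hv
    have hv1 : sSup S < v := lt_min (by linarith) (by linarith)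
    have hva : v ≤ a := (min_le_right _ _).trans (by linarith)
    have hvm : |v - sSup S| < ε := by
      rw [abs_of_nonneg (by linarith)]
      have : v ≤ sSup S + ε / 2 := min_le_left _ _
      linarith
    have hvS : v ∈ S := ⟨⟨hsm.trans hv1.le, hva⟩, by
      show f v = f s
      rw [hconst v hvm]; exact hfm'⟩
    exact absurd (le_csSup hbdd hvS) (not_le.2 hv1)

lemma reach_left {f : ℝ → Z} (hf : Continuous f) {a s : ℝ} (has : a ≤ s)
    (h : ∀ u, a < u → u ≤ s → ∃ ε > 0, ∀ v : ℝ, |v - u| < ε → f v = f u) :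
    f a = f s := by
  have key := reach_right (f := fun u => f (-u)) (hf.comp continuous_neg)
    (s := -s) (a := -a) (by linarith) ?_
  · simpa using key
  · intro u hsu hua
    obtain ⟨ε, hε, hc⟩ := h (-u) (by linarith) (by linarith)
    refine ⟨ε, hε, fun v hv => ?_⟩
    exact hc (-v) (by rw [neg_sub_neg, abs_sub_comm]; exact hv)

lemma geo_lip {c : ℝ → Z} (h : IsGenGeodesic c) (s t : ℝ) :
    dist (c s) (c t) ≤ |s - t| := by
  obtain ⟨hcont, I, hshape, hiso, hloc⟩ := h
  have hR : ∀ x y : ℝ, x ≤ y → (∀ u, x ≤ u → u < y → u ∉ I) → c y = c x :=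
    fun x y hxy hu => reach_right hcont hxy fun u h1 h2 => hloc u (hu u h1 h2)
  have hL : ∀ x y : ℝ, x ≤ y → (∀ u, x < u → u ≤ y → u ∉ I) → c x = c y :=
    fun x y hxy hu => reach_left hcont hxy fun u h1 h2 => hloc u (hu u h1 h2)
  suffices hp : ∃ p : ℝ → ℝ, (∀ x, p x ∈ I) ∧ (∀ x, c x = c (p x)) ∧ |p s - p t| ≤ |s - t| by
    obtain ⟨p, h1, h2, h3⟩ := hp
    calc dist (c s) (c t) = dist (c (p s)) (c (p t)) := by rw [← h2 s, ← h2 t]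
      _ = |p s - p t| := hiso _ (h1 s) _ (h1 t)
      _ ≤ |s - t| := h3
  rcases hshape with ⟨a, b, hab, hI⟩ | ⟨a, hI⟩ | ⟨b, hI⟩ | hI
  · -- I = Icc a b
    subst hI
    refine ⟨fun x => max a (min x b), fun x => ⟨le_max_left _ _, max_le hab (min_le_right _ _)⟩,
      fun x => ?_, ?_⟩
    · beta_reduce
      rcases lt_or_ge x a with hxa | hax
      · have hpx : max a (min x b) = a := by
          rw [min_eq_left (hxa.le.trans hab), max_eq_left hxa.le]
        rw [hpx]
        exact (hR x a hxa.le fun u h1 h2 hu => absurd hu.1 (not_le.2 h2)).symm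
      · rcases le_or_gt x b with hxb | hbx
        · rw [min_eq_left hxb, max_eq_right hax]
        · have hpx : max a (min x b) = b := by
            rw [min_eq_right hbx.le, max_eq_right hab]
          rw [hpx]
          exact (hL b x hbx.le fun u h1 h2 hu => absurd hu.2 (not_le.2 h1)).symm
    · beta_reduce
      calc |max a (min s b) - max a (min t b)|
          = |max (min s b) a - max (min t b) a| := by rw [max_comm a, max_comm a]
        _ ≤ |min s b - min t b| := abs_max_sub_max_le_abs _ _ _
        _ ≤ max |s - t| |b - b| := abs_min_sub_min_le_max _ _ _ _
        _ = |s - t| := by simp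
  · -- I = Ici a
    subst hI
    refine ⟨fun x => max a x, fun x => show a ≤ max a x from le_max_left _ _, fun x => ?_, ?_⟩
    · beta_reduce
      rcases lt_or_ge x a with hxa | hax
      · rw [max_eq_left hxa.le]
        exact (hR x a hxa.le fun u h1 h2 hu => absurd hu (not_le.2 h2)).symm
      · rw [max_eq_right hax]
    · beta_reduce
      calc |max a s - max a t| = |max s a - max t a| := by rw [max_comm a, max_comm a]
        _ ≤ |s - t| := abs_max_sub_max_le_abs _ _ _
  · -- I = Iic b
    subst hI
    refine ⟨fun x => min x b, fun x => show x ⊓ b ∈ Iic b from min_le_right x b, fun x => ?_, ?_⟩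
    · beta_reduce
      rcases le_or_gt x b with hxb | hbx
      · rw [min_eq_left hxb]
      · rw [min_eq_right hbx.le]
        exact (hL b x hbx.le fun u h1 h2 hu => absurd hu (not_le.2 h1)).symm
    · beta_reduce
      calc |min s b - min t b| ≤ max |s - t| |b - b| := abs_min_sub_min_le_max _ _ _ _
        _ = |s - t| := by simp
  · subst hI
    exact ⟨id, fun x => mem_univ x, fun x => rfl, le_refl _⟩

lemma integrable_exp_neg_mul_abs {b : ℝ} (hb : 0 < b) :
    Integrable fun t : ℝ => exp (-b * |t|) := by
  have hcont : Continuous fun t : ℝ => exp (-b * |t|) :=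
    Real.continuous_exp.comp (continuous_const.mul continuous_abs)
  refine hcont.locallyIntegrable.integrable_of_isBigO_atTop_of_norm_isNegInvariant
    (Filter.EventuallyEq.of_eq ?_) ?_
    ⟨Ioi 0, Filter.Ioi_mem_atTop 0, exp_neg_integrableOn_Ioi 0 hb⟩
  · funext t; simp [Function.comp, abs_neg]
  · refine Filter.EventuallyEq.isBigO ?_
    filter_upwards [Filter.eventually_ge_atTop (0 : ℝ)] with t ht
    rw [abs_of_nonneg ht]

lemma integral_exp_neg_abs : ∫ t : ℝ, exp (-|t|) = 2 := by
  have hint : Integrable fun t : ℝ => exp (-|t|) := by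
    simpa using integrable_exp_neg_mul_abs one_pos
  rw [← intervalIntegral.integral_Iic_add_Ioi (b := (0:ℝ)) hint.integrableOn hint.integrableOn]
  have h1 : ∫ t in Iic (0:ℝ), exp (-|t|) = 1 := by
    rw [setIntegral_congr_fun measurableSet_Iic (g := fun t => exp t)
      (fun x hx => by rw [abs_of_nonpos hx, neg_neg])]
    exact integral_exp_Iic_zero
  have h2 : ∫ t in Ioi (0:ℝ), exp (-|t|) = 1 := by
    rw [setIntegral_congr_fun measurableSet_Ioi (g := fun t => exp (-t))
      (fun x hx => by rw [abs_of_nonneg (le_of_lt hx)])]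
    exact integral_exp_neg_Ioi_zero
  rw [h1, h2]; norm_num

lemma integrable_aux {c d : ℝ → Z} (hc : Continuous c) (hd : Continuous d)
    (hlc : ∀ s t, dist (c s) (c t) ≤ |s - t|) (hld : ∀ s t, dist (d s) (d t) ≤ |s - t|)
    (τ σ : ℝ) :
    Integrable fun t : ℝ => dist (c (t + τ)) (d (t + σ)) / (2 * exp |t|) := by
  set A := dist (c τ) (d σ) with hA
  have hA0 : 0 ≤ A := dist_nonneg
  have hbound : ∀ t : ℝ, dist (c (t + τ)) (d (t + σ)) ≤ A + 2 * |t| := by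
    intro t
    calc dist (c (t + τ)) (d (t + σ))
        ≤ dist (c (t + τ)) (c τ) + dist (c τ) (d σ) + dist (d σ) (d (t + σ)) :=
          dist_triangle4 _ _ _ _
      _ ≤ |t + τ - τ| + A + |σ - (t + σ)| := by
          refine add_le_add (add_le_add (hlc _ _) le_rfl) (hld _ _)
      _ = A + 2 * |t| := by
          rw [add_sub_cancel_right, show σ - (t + σ) = -t by ring, abs_neg]; ring
  have hmaj : ∀ t : ℝ, dist (c (t + τ)) (d (t + σ)) / (2 * exp |t|)
      ≤ (A + 4) / 2 * exp (-(1 / 2) * |t|) := by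
    intro t
    have h2 : (0 : ℝ) < 2 * exp |t| := by positivity
    rw [div_le_iff₀ h2]
    have he : exp (-(1 / 2) * |t|) * (2 * exp |t|) = 2 * exp (|t| / 2) := by
      rw [mul_comm (2 : ℝ) (exp |t|), ← mul_assoc, mul_comm (exp (-(1/2) * |t|)) (exp |t|),
        ← exp_add, mul_comm]
      ring_nf
    have hexp : 1 + |t| / 2 ≤ exp (|t| / 2) := by
      have := Real.add_one_le_exp (|t| / 2); linarith
    have habs : 0 ≤ |t| := abs_nonneg t
    calc dist (c (t + τ)) (d (t + σ)) ≤ A + 2 * |t| := hbound t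
      _ ≤ (A + 4) * (1 + |t| / 2) := by nlinarith
      _ ≤ (A + 4) * exp (|t| / 2) := by nlinarith [exp_pos (|t| / 2)]
      _ = (A + 4) / 2 * (2 * exp (|t| / 2)) := by ring
      _ = (A + 4) / 2 * (exp (-(1 / 2) * |t|) * (2 * exp |t|)) := by rw [he]
      _ = (A + 4) / 2 * exp (-(1 / 2) * |t|) * (2 * exp |t|) := by ring
  have hg : Integrable fun t : ℝ => (A + 4) / 2 * exp (-(1 / 2) * |t|) :=
    (integrable_exp_neg_mul_abs (by norm_num : (0:ℝ) < 1 / 2)).const_mul _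
  refine hg.mono' ?_ (Filter.Eventually.of_forall fun t => ?_)
  · refine Continuous.aestronglyMeasurable ?_
    refine Continuous.div (Continuous.dist (hc.comp (by continuity)) (hd.comp (by continuity)))
      (continuous_const.mul (Real.continuous_exp.comp continuous_abs)) fun t => by positivity
  · rw [Real.norm_eq_abs, abs_of_nonneg (by positivity)]
    exact hmaj t

end Aux

/-- Estimate for the flow: `d_FS(Φ_τ(c), Φ_σ(d)) ≤ e^{|τ|} d_FS(c,d) + |σ − τ|`. -/
theorem flow_estimate {Z : Type*} [MetricSpace Z] (c d : ℝ → Z)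
    (hc : IsGenGeodesic c) (hd : IsGenGeodesic d) (τ σ : ℝ) :
    dFS (flowFS c τ) (flowFS d σ) ≤ Real.exp |τ| * dFS c d + |σ - τ| := by
  have hcc : Continuous c := hc.1
  have hdc : Continuous d := hd.1
  have hlc : ∀ s t, dist (c s) (c t) ≤ |s - t| := geo_lip hc
  have hld : ∀ s t, dist (d s) (d t) ≤ |s - t| := geo_lip hd
  -- integrands and their integrability
  have hf1 : Integrable fun t : ℝ => dist (c (t + τ)) (d (t + σ)) / (2 * exp |t|) :=
    integrable_aux hcc hdc hlc hld τ σ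
  have hf2 : Integrable fun t : ℝ => dist (c (t + τ)) (d (t + τ)) / (2 * exp |t|) :=
    integrable_aux hcc hdc hlc hld τ τ
  have hE : Integrable fun t : ℝ => exp (-|t|) := by
    simpa using integrable_exp_neg_mul_abs one_pos
  have hf3eq : (fun t : ℝ => |σ - τ| / (2 * exp |t|))
      = fun t : ℝ => |σ - τ| / 2 * exp (-|t|) := by
    funext t; rw [Real.exp_neg]; field_simp
  have hf3 : Integrable fun t : ℝ => |σ - τ| / (2 * exp |t|) := by
    rw [hf3eq]; exact hE.const_mul _
  have hG : Integrable fun t : ℝ => dist (c t) (d t) / (2 * exp |t|) := by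
    simpa using integrable_aux hcc hdc hlc hld 0 0
  have hF : Integrable fun u : ℝ => dist (c u) (d u) / (2 * exp |u - τ|) := by
    have h := hf2.comp_add_right (-τ)
    simpa only [sub_add_cancel, ← sub_eq_add_neg] using h
  -- step 1 : pointwise bound and first integral inequality
  have step1 : dFS (flowFS c τ) (flowFS d σ)
      ≤ (∫ t : ℝ, dist (c (t + τ)) (d (t + τ)) / (2 * exp |t|))
        + ∫ t : ℝ, |σ - τ| / (2 * exp |t|) := by
    have : dFS (flowFS c τ) (flowFS d σ)
        = ∫ t : ℝ, dist (c (t + τ)) (d (t + σ)) / (2 * exp |t|) := rfl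
    rw [this, ← integral_add hf2 hf3]
    refine integral_mono hf1 (hf2.add hf3) fun t => ?_
    have hptw : dist (c (t + τ)) (d (t + σ))
        ≤ dist (c (t + τ)) (d (t + τ)) + |σ - τ| := by
      have h1 := dist_triangle (c (t + τ)) (d (t + τ)) (d (t + σ))
      have h2 : dist (d (t + τ)) (d (t + σ)) ≤ |σ - τ| := by
        have := hld (t + τ) (t + σ)
        rw [show t + τ - (t + σ) = -(σ - τ) by ring, abs_neg] at this
        exact this
      linarith
    have hpos : (0 : ℝ) < 2 * exp |t| := by positivity
    simp only [Pi.add_apply]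
    rw [← add_div]
    gcongr
  -- step 2 : compute the error integral
  have step2 : (∫ t : ℝ, |σ - τ| / (2 * exp |t|)) = |σ - τ| := by
    rw [hf3eq, integral_const_mul, integral_exp_neg_abs]
    ring
  -- step 3 : translation
  have step3 : (∫ t : ℝ, dist (c (t + τ)) (d (t + τ)) / (2 * exp |t|))
      = ∫ u : ℝ, dist (c u) (d u) / (2 * exp |u - τ|) := by
    have h := integral_add_right_eq_self (μ := volume)
      (fun u : ℝ => dist (c u) (d u) / (2 * exp |u - τ|)) τ
    rw [← h]
    simp only [add_sub_cancel_right]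
  -- step 4 : compare with dFS c d
  have step4 : (∫ u : ℝ, dist (c u) (d u) / (2 * exp |u - τ|))
      ≤ exp |τ| * dFS c d := by
    have : exp |τ| * dFS c d = ∫ u : ℝ, exp |τ| * (dist (c u) (d u) / (2 * exp |u|)) := by
      rw [integral_const_mul]; rfl
    rw [this]
    refine integral_mono hF (hG.const_mul _) fun u => ?_
    have hden : 2 * (exp |u| * exp (-|τ|)) ≤ 2 * exp |u - τ| := by
      rw [← exp_add]
      have : |u| - |τ| ≤ |u - τ| := abs_sub_abs_le_abs_sub u τ
      have := exp_le_exp.2 (show |u| + -|τ| ≤ |u - τ| by linarith)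
      linarith
    have hpos1 : (0 : ℝ) < 2 * (exp |u| * exp (-|τ|)) := by positivity
    calc dist (c u) (d u) / (2 * exp |u - τ|)
        ≤ dist (c u) (d u) / (2 * (exp |u| * exp (-|τ|))) := by
          gcongr
      _ = exp |τ| * (dist (c u) (d u) / (2 * exp |u|)) := by
          rw [Real.exp_neg]; field_simp
  calc dFS (flowFS c τ) (flowFS d σ)
      ≤ (∫ t : ℝ, dist (c (t + τ)) (d (t + τ)) / (2 * exp |t|))
        + ∫ t : ℝ, |σ - τ| / (2 * exp |t|) := step1
    _ = (∫ u : ℝ, dist (c u) (d u) / (2 * exp |u - τ|)) + |σ - τ| := by rw [step2, step3]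
    _ ≤ exp |τ| * dFS c d + |σ - τ| := by linarith [step4]
end

section
/- Approximate triangle inequality for the V-foliated distance, uniform in V: let G be a locally compact group with left-invariant proper metric d_G and fix α ≥ 0. Then for every ε > 0 there is δ > 0 such that for every closed subgroup V of G and all g, g', g'' ∈ G: if fol_V(g,g') ≤ (α,δ) and fol_V(g',g'') ≤ (α,δ) then fol_V(g,g'') ≤ (2α, ε). -/
/-- Approximate triangle inequality for the `V`-foliated distance, uniform in `V`. -/
theorem folV_triangle {G : Type*} [Group G] [MetricSpace G] [IsTopologicalGroup G]
    [ProperSpace G] [SecondCountableTopology G]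
    (hleft : ∀ g a b : G, dist (g * a) (g * b) = dist a b)
    (α : ℝ) (hα : 0 ≤ α) :
    ∀ ε > 0, ∃ δ > 0, ∀ V : Subgroup G, IsClosed (V : Set G) → ∀ g g' g'' : G,
      (∃ v ∈ V, dist (1 : G) v ≤ α ∧ dist (g * v) g' ≤ δ) →
      (∃ v ∈ V, dist (1 : G) v ≤ α ∧ dist (g' * v) g'' ≤ δ) →
      (∃ v ∈ V, dist (1 : G) v ≤ 2 * α ∧ dist (g * v) g'' ≤ ε) := by
  intro ε hε
  -- The function measuring the displacement of `v` under left multiplication by `w`.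
  set F : G × G → ℝ := fun p => dist p.2 (p.1 * p.2) with hF
  have hFcont : Continuous F := continuous_snd.dist (continuous_fst.mul continuous_snd)
  set S : Set (G × G) :=
    Metric.closedBall (1 : G) 1 ×ˢ Metric.closedBall (1 : G) α with hS
  have hScomp : IsCompact S :=
    (isCompact_closedBall _ _).prod (isCompact_closedBall _ _)
  have hUC : UniformContinuousOn F S :=
    hScomp.uniformContinuousOn_of_continuous hFcont.continuousOn
  rw [Metric.uniformContinuousOn_iff] at hUC
  obtain ⟨δ₀, hδ₀, hδ₀'⟩ := hUC (ε / 2) (by linarith)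
  refine ⟨min (min δ₀ 1) (ε / 2) / 2, by positivity, ?_⟩
  intro V hV g g' g'' ⟨v₁, hv₁V, hv₁α, hv₁d⟩ ⟨v₂, hv₂V, hv₂α, hv₂d⟩
  set δ := min (min δ₀ 1) (ε / 2) / 2 with hδdef
  have hδδ₀ : δ < δ₀ := by
    have : δ ≤ min δ₀ 1 / 2 := by
      apply div_le_div_of_nonneg_right ?_ (by norm_num)
      exact min_le_left _ _
    have h1 : min δ₀ 1 / 2 < δ₀ := by
      have := min_le_left δ₀ 1
      linarith [lt_min_iff.mp (show (0:ℝ) < min δ₀ 1 from lt_min hδ₀ one_pos)]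
    linarith
  have hδ1 : δ ≤ 1 := by
    have : δ ≤ min δ₀ 1 / 2 :=
      div_le_div_of_nonneg_right (min_le_left _ _) (by norm_num)
    have := min_le_right δ₀ 1
    linarith
  have hδε : δ ≤ ε / 2 := by
    have : δ ≤ (ε / 2) / 2 :=
      div_le_div_of_nonneg_right (min_le_right _ _) (by norm_num)
    linarith
  refine ⟨v₁ * v₂, V.mul_mem hv₁V hv₂V, ?_, ?_⟩
  · calc dist (1 : G) (v₁ * v₂) ≤ dist (1 : G) v₁ + dist v₁ (v₁ * v₂) := dist_triangle _ _ _
      _ = dist (1 : G) v₁ + dist (1 : G) v₂ := by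
          rw [show dist v₁ (v₁ * v₂) = dist (v₁ * 1) (v₁ * v₂) by rw [mul_one], hleft]
      _ ≤ 2 * α := by linarith
  · -- key step: dist (g * v₁ * v₂) (g' * v₂) ≤ ε/2
    set w : G := (g * v₁)⁻¹ * g' with hw
    have hdistw : dist (1 : G) w = dist (g * v₁) g' := by
      rw [hw, show dist (g * v₁) g' = dist ((g * v₁) * 1) ((g * v₁) * ((g * v₁)⁻¹ * g')) by
        rw [mul_one, mul_inv_cancel_left], hleft]
    have hwS : (w, v₂) ∈ S := by
      constructor
      · simp only [Metric.mem_closedBall]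
        rw [dist_comm, hdistw]
        linarith [hv₁d]
      · simp only [Metric.mem_closedBall]
        rw [dist_comm]; exact hv₂α
    have h1S : ((1 : G), v₂) ∈ S := by
      constructor
      · simp [Metric.mem_closedBall]
      · simp only [Metric.mem_closedBall]
        rw [dist_comm]; exact hv₂α
    have hdd : dist ((w, v₂) : G × G) ((1 : G), v₂) < δ₀ := by
      rw [Prod.dist_eq]
      simp only [dist_self]
      rw [max_eq_left dist_nonneg]
      calc dist w (1 : G) = dist (g * v₁) g' := by rw [dist_comm]; exact hdistw
        _ ≤ δ := hv₁d
        _ < δ₀ := hδδ₀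
    have hFlt : dist (F (w, v₂)) (F ((1 : G), v₂)) < ε / 2 := hδ₀' _ hwS _ h1S hdd
    have hF1 : F ((1 : G), v₂) = 0 := by simp [hF]
    have hFval : F (w, v₂) = dist (g * v₁ * v₂) (g' * v₂) := by
      have : dist (g * v₁ * v₂) (g' * v₂)
          = dist ((g * v₁) * v₂) ((g * v₁) * (w * v₂)) := by
        rw [hw]; congr 1; rw [← mul_assoc, mul_inv_cancel_left]
      rw [this, hleft]
    have hkey : dist (g * v₁ * v₂) (g' * v₂) < ε / 2 := by
      rw [hF1, dist_zero_right, Real.norm_eq_abs] at hFlt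
      rw [← hFval]
      calc F (w, v₂) ≤ |F (w, v₂)| := le_abs_self _
        _ < ε / 2 := hFlt
    calc dist (g * (v₁ * v₂)) g''
        ≤ dist (g * (v₁ * v₂)) (g' * v₂) + dist (g' * v₂) g'' := dist_triangle _ _ _
      _ = dist (g * v₁ * v₂) (g' * v₂) + dist (g' * v₂) g'' := by rw [mul_assoc]
      _ ≤ ε / 2 + δ := add_le_add hkey.le hv₂d
      _ ≤ ε := by linarith
end

section
/- Let Z be a compact metric space with a continuous flow Φ, let α̂ > 0, let K ⊆ Z be compact and U an open neighborhood of K. Then there exists a continuous function f : Z → [0,1] such that: (1) f ≡ 1 on K; (2) f ≡ 0 outside Φ_{[−α̂,α̂]}(U); (3) for all s ∈ ℝ and z ∈ Z, |f(Φ_s(z)) − f(z)| ≤ |s|/α̂. -/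
/-- Slow bump functions for a flow on a compact metric space. -/
theorem slow_bump_function {Z : Type*} [MetricSpace Z] [CompactSpace Z]
    (Φ : ℝ → Z → Z) (hΦcont : Continuous fun p : ℝ × Z => Φ p.1 p.2)
    (hΦ0 : ∀ z, Φ 0 z = z) (hΦadd : ∀ s t z, Φ (s + t) z = Φ s (Φ t z))
    (a : ℝ) (ha : 0 < a) (K : Set Z) (hK : IsCompact K)
    (U : Set Z) (hU : IsOpen U) (hKU : K ⊆ U) :
    ∃ f : Z → ℝ, Continuous f ∧ (∀ z, f z ∈ Set.Icc (0 : ℝ) 1) ∧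
      (∀ z ∈ K, f z = 1) ∧
      (∀ z, z ∉ {y : Z | ∃ t ∈ Set.Icc (-a) a, ∃ u ∈ U, y = Φ t u} → f z = 0) ∧
      (∀ (s : ℝ) (z : Z), |f (Φ s z) - f z| ≤ |s| / a) := by
  -- Urysohn function φ : 1 on K, 0 outside U, values in [0,1]
  obtain ⟨φ, hφ1, hφ0, -, hφ01⟩ :=
    exists_continuous_one_zero_of_isCompact hK hU.isClosed_compl
      (Set.disjoint_compl_right_iff_subset.mpr hKU)
  set g : ℝ → Z → ℝ := fun t z => (1 - |t| / a) * φ (Φ t z) with hg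
  set S : Z → Set ℝ := fun z => (g · z) '' Set.Icc (-a) a with hS
  set f : Z → ℝ := fun z => sSup (S z) with hf
  have hg01 : ∀ t ∈ Set.Icc (-a) a, ∀ z, g t z ∈ Set.Icc (0 : ℝ) 1 := by
    intro t ht z
    have h1 : |t| ≤ a := abs_le.mpr ⟨ht.1, ht.2⟩
    have h2 : 0 ≤ |t| / a := div_nonneg (abs_nonneg t) ha.le
    have h3 : |t| / a ≤ 1 := (div_le_one ha).mpr h1
    have h4 := (hφ01 (Φ t z)).1
    have h5 := (hφ01 (Φ t z)).2
    constructor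
    · exact mul_nonneg (by linarith) h4
    · calc (1 - |t| / a) * φ (Φ t z) ≤ 1 * 1 := by nlinarith
        _ = 1 := by ring
  have hne : ∀ z, (S z).Nonempty :=
    fun z => (Set.nonempty_Icc.mpr (by linarith)).image _
  have hbdd : ∀ z, BddAbove (S z) := by
    intro z
    refine ⟨1, ?_⟩
    rintro x ⟨t, ht, rfl⟩
    exact (hg01 t ht z).2
  have hf1 : ∀ z, f z ≤ 1 := by
    intro z
    apply csSup_le (hne z)
    rintro x ⟨t, ht, rfl⟩
    exact (hg01 t ht z).2
  have hf0 : ∀ z, 0 ≤ f z := by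
    intro z
    have : g a z ∈ S z := ⟨a, ⟨by linarith, le_refl a⟩, rfl⟩
    have hval : g a z = 0 := by
      simp only [hg, abs_of_pos ha, div_self ha.ne']
      ring
    calc (0 : ℝ) = g a z := hval.symm
      _ ≤ f z := le_csSup (hbdd z) this
  -- key inequality
  have hkey : ∀ (s : ℝ) (z : Z), f (Φ s z) ≤ f z + |s| / a := by
    intro s z
    apply csSup_le (hne (Φ s z))
    rintro x ⟨t, ht, rfl⟩
    have habs : |t| ≤ a := abs_le.mpr ⟨ht.1, ht.2⟩
    have hφeq : Φ t (Φ s z) = Φ (t + s) z := (hΦadd t s z).symm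
    have hφv1 := (hφ01 (Φ (t + s) z)).1
    have hφv2 := (hφ01 (Φ (t + s) z)).2
    have hsa : 0 ≤ |s| / a := div_nonneg (abs_nonneg s) ha.le
    by_cases hts : t + s ∈ Set.Icc (-a) a
    · have hmem : g (t + s) z ∈ S z := ⟨t + s, hts, rfl⟩
      have hle : g (t + s) z ≤ f z := le_csSup (hbdd z) hmem
      have hdiff : |t + s| - |t| ≤ |s| := by
        have := abs_sub_abs_le_abs_sub (t + s) t
        simpa using this
      have hq : (|t + s| - |t|) * φ (Φ (t + s) z) ≤ |s| := by
        nlinarith [mul_nonneg (sub_nonneg.mpr hdiff) hφv1,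
          mul_nonneg (abs_nonneg s) (sub_nonneg.mpr hφv2)]
      have hq2 : ((|t + s| - |t|) * φ (Φ (t + s) z)) / a ≤ |s| / a :=
        (div_le_div_iff_of_pos_right ha).mpr hq
      have : g t (Φ s z) ≤ g (t + s) z + |s| / a := by
        simp only [hg, hφeq]
        have hexp : (1 - |t| / a) * φ (Φ (t + s) z) =
            (1 - |t + s| / a) * φ (Φ (t + s) z)
              + ((|t + s| - |t|) * φ (Φ (t + s) z)) / a := by
          field_simp
          ring
        rw [hexp]
        linarith
      linarith
    · have h1 : a < |t + s| := by
        by_contra hc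
        push_neg at hc
        exact hts ⟨by linarith [neg_abs_le (t + s)], le_trans (le_abs_self _) hc⟩
      have h2 : |t + s| - |t| ≤ |s| := by
        have := abs_sub_abs_le_abs_sub (t + s) t
        simpa using this
      have h3 : 1 - |t| / a ≤ |s| / a := by
        have hat : a - |t| ≤ |s| := by linarith
        have := (div_le_div_iff_of_pos_right ha).mpr hat
        rw [sub_div, div_self ha.ne'] at this
        linarith
      have : g t (Φ s z) ≤ |s| / a := by
        simp only [hg, hφeq]
        have hnn : 0 ≤ 1 - |t| / a := by
          have : |t| / a ≤ 1 := (div_le_one ha).mpr habs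
          linarith
        nlinarith [mul_nonneg hnn (sub_nonneg.mpr hφv2)]
      linarith [hf0 z]
  refine ⟨f, ?_, fun z => ⟨hf0 z, hf1 z⟩, ?_, ?_, ?_⟩
  · -- continuity
    have Hcont : Continuous fun p : ℝ × Z => g p.1 p.2 := by
      apply Continuous.mul
      · exact (continuous_const.sub ((continuous_abs.comp continuous_fst).div_const a))
      · exact φ.continuous.comp hΦcont
    have hCcomp : IsCompact ((Set.Icc (-a) a) ×ˢ (Set.univ : Set Z)) :=
      isCompact_Icc.prod isCompact_univ
    have UC : UniformContinuousOn (fun p : ℝ × Z => g p.1 p.2)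
        ((Set.Icc (-a) a) ×ˢ (Set.univ : Set Z)) :=
      hCcomp.uniformContinuousOn_of_continuous Hcont.continuousOn
    rw [Metric.uniformContinuousOn_iff] at UC
    rw [Metric.continuous_iff]
    intro z ε hε
    obtain ⟨δ, hδ, hδ'⟩ := UC (ε / 2) (by linarith)
    refine ⟨δ, hδ, fun w hw => ?_⟩
    have key : ∀ u v : Z, dist u v < δ → f u ≤ f v + ε / 2 := by
      intro u v huv
      apply csSup_le (hne u)
      rintro x ⟨t, ht, rfl⟩
      have h1 : (t, u) ∈ (Set.Icc (-a) a) ×ˢ (Set.univ : Set Z) := ⟨ht, trivial⟩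
      have h2 : (t, v) ∈ (Set.Icc (-a) a) ×ˢ (Set.univ : Set Z) := ⟨ht, trivial⟩
      have hd : dist ((t, u) : ℝ × Z) (t, v) < δ := by
        rw [Prod.dist_eq]
        simp only [dist_self]
        exact max_lt hδ huv
      have := hδ' (t, u) h1 (t, v) h2 hd
      rw [Real.dist_eq] at this
      have hle : g t u ≤ g t v + ε / 2 := by
        have := abs_lt.mp this
        linarith [this.2]
      calc g t u ≤ g t v + ε / 2 := hle
        _ ≤ f v + ε / 2 := by
            have : g t v ∈ S v := ⟨t, ht, rfl⟩
            linarith [le_csSup (hbdd v) this]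
    have h1 : f w ≤ f z + ε / 2 := key w z hw
    have h2 : f z ≤ f w + ε / 2 := key z w (by rwa [dist_comm])
    rw [Real.dist_eq, abs_lt]
    constructor <;> linarith
  · -- f = 1 on K
    intro z hz
    have hmem : g 0 z ∈ S z := ⟨0, ⟨by linarith, ha.le⟩, rfl⟩
    have hval : g 0 z = 1 := by
      simp only [hg, abs_zero, zero_div, sub_zero, one_mul, hΦ0]
      exact hφ1 hz
    have : 1 ≤ f z := hval ▸ le_csSup (hbdd z) hmem
    linarith [hf1 z]
  · -- f = 0 outside the flow-saturation of U
    intro z hz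
    have hall : ∀ t ∈ Set.Icc (-a) a, φ (Φ t z) = 0 := by
      intro t ht
      by_contra hne'
      apply hz
      refine ⟨-t, ⟨by linarith [ht.2], by linarith [ht.1]⟩, Φ t z, ?_, ?_⟩
      · by_contra hU'
        exact hne' (hφ0 hU')
      · rw [← hΦadd, neg_add_cancel, hΦ0]
    have hle : f z ≤ 0 := by
      apply csSup_le (hne z)
      rintro x ⟨t, ht, rfl⟩
      simp [hg, hall t ht]
    linarith [hf0 z]
  · -- slow variation
    intro s z
    rw [abs_sub_le_iff]
    constructor
    · linarith [hkey s z]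
    · have h := hkey (-s) (Φ s z)
      rw [← hΦadd, neg_add_cancel, hΦ0, abs_neg] at h
      linarith
end

section
/- Given continuous functions f_U : Z → [0,1] indexed by a finite set 𝒰 such that (a) for every z there is U with f_U(z) = 1, (b) for every z at most N+1 of the values f_U(z) are nonzero, and (c) |f_U(z) − f_U(z')| ≤ η for all U whenever z' = Φ_τ(z) with |τ| ≤ α, then the normalized functions t_U(z) = f_U(z) / Σ_{U'} f_{U'}(z) satisfy |t_U(z) − t_U(Φ_τ(z))| ≤ (2N+3)·η for all U ∈ 𝒰, z ∈ Z and |τ| ≤ α. -/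
/-- Normalizing slow bump functions yields a partition of unity whose members vary
slowly along the flow. -/
theorem normalized_partition_estimate {Z : Type*} {ι : Type*} [Fintype ι]
    (Φ : ℝ → Z → Z) (N : ℕ) (α η : ℝ) (hα : 0 < α) (hη : 0 < η)
    (f : ι → Z → ℝ)
    (hrange : ∀ i z, f i z ∈ Set.Icc (0 : ℝ) 1)
    (hone : ∀ z, ∃ i, f i z = 1)
    (hcard : ∀ z, {i : ι | f i z ≠ 0}.ncard ≤ N + 1)
    (hslow : ∀ (i : ι) (z : Z) (τ : ℝ), |τ| ≤ α → |f i (Φ τ z) - f i z| ≤ η) :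
    ∀ (i : ι) (z : Z) (τ : ℝ), |τ| ≤ α →
      |f i (Φ τ z) / (∑ j, f j (Φ τ z)) - f i z / (∑ j, f j z)| ≤ (2 * (N : ℝ) + 3) * η := by
  classical
  -- sum is at least 1 at every point
  have hSone : ∀ w : Z, (1 : ℝ) ≤ ∑ j, f j w := by
    intro w
    obtain ⟨i, hi⟩ := hone w
    calc (1 : ℝ) = f i w := hi.symm
      _ ≤ ∑ j, f j w := by
        apply Finset.single_le_sum (fun j _ => (hrange j w).1) (Finset.mem_univ i)
  have hcard' : ∀ w : Z, (Finset.univ.filter (fun j => f j w ≠ 0)).card ≤ N + 1 := by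
    intro w
    have := hcard w
    rwa [Set.ncard_eq_toFinset_card', Set.toFinset_setOf] at this
  intro i z τ hτ
  set z' := Φ τ z with hz'
  set S := ∑ j, f j z with hS
  set S' := ∑ j, f j z' with hS'
  have hS1 : (1 : ℝ) ≤ S := hSone z
  have hS'1 : (1 : ℝ) ≤ S' := hSone z'
  have hSpos : (0 : ℝ) < S := lt_of_lt_of_le one_pos hS1
  have hS'pos : (0 : ℝ) < S' := lt_of_lt_of_le one_pos hS'1
  -- bound the difference of sums
  have hSdiff : |S' - S| ≤ (2 * (N : ℝ) + 2) * η := by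
    have hsum : S' - S = ∑ j, (f j z' - f j z) := by
      rw [hS, hS', Finset.sum_sub_distrib]
    set T := Finset.univ.filter (fun j => f j z' - f j z ≠ 0) with hT
    have hsum2 : ∑ j, (f j z' - f j z) = ∑ j ∈ T, (f j z' - f j z) :=
      (Finset.sum_filter_ne_zero _).symm
    have hTsub : T ⊆ Finset.univ.filter (fun j => f j z' ≠ 0) ∪
        Finset.univ.filter (fun j => f j z ≠ 0) := by
      intro j hj
      simp only [hT, Finset.mem_filter, Finset.mem_univ, true_and] at hj
      simp only [Finset.mem_union, Finset.mem_filter, Finset.mem_univ, true_and]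
      by_contra hcon
      push_neg at hcon
      exact hj (by rw [hcon.1, hcon.2]; ring)
    have hTcard : (T.card : ℝ) ≤ 2 * (N : ℝ) + 2 := by
      have h1 : T.card ≤ (N + 1) + (N + 1) := by
        calc T.card ≤ _ := Finset.card_le_card hTsub
          _ ≤ _ := Finset.card_union_le _ _
          _ ≤ (N + 1) + (N + 1) := add_le_add (hcard' z') (hcard' z)
      calc (T.card : ℝ) ≤ ((N + 1) + (N + 1) : ℕ) := by exact_mod_cast h1
        _ = 2 * (N : ℝ) + 2 := by push_cast; ring
    calc |S' - S| = |∑ j ∈ T, (f j z' - f j z)| := by rw [hsum, hsum2]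
      _ ≤ ∑ j ∈ T, |f j z' - f j z| := Finset.abs_sum_le_sum_abs _ _
      _ ≤ ∑ _j ∈ T, η := Finset.sum_le_sum (fun j _ => hslow j z τ hτ)
      _ = (T.card : ℝ) * η := by rw [Finset.sum_const, nsmul_eq_mul]
      _ ≤ (2 * (N : ℝ) + 2) * η := by
          exact mul_le_mul_of_nonneg_right hTcard (le_of_lt hη)
  have key : f i z' / S' - f i z / S
      = (f i z' - f i z) / S' + (f i z / S) * ((S - S') / S') := by
    field_simp
    ring
  have h1 : |(f i z' - f i z) / S'| ≤ η := by
    rw [abs_div, abs_of_pos hS'pos]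
    calc |f i z' - f i z| / S' ≤ |f i z' - f i z| / 1 :=
          div_le_div_of_nonneg_left (abs_nonneg _) one_pos hS'1
      _ = |f i z' - f i z| := div_one _
      _ ≤ η := hslow i z τ hτ
  have h2 : |(f i z / S) * ((S - S') / S')| ≤ (2 * (N : ℝ) + 2) * η := by
    rw [abs_mul]
    have hb1 : |f i z / S| ≤ 1 := by
      rw [abs_div, abs_of_pos hSpos, abs_of_nonneg (hrange i z).1]
      rw [div_le_one hSpos]
      exact le_trans (hrange i z).2 hS1
    have hb2 : |(S - S') / S'| ≤ (2 * (N : ℝ) + 2) * η := by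
      rw [abs_div, abs_of_pos hS'pos]
      calc |S - S'| / S' ≤ |S - S'| / 1 :=
            div_le_div_of_nonneg_left (abs_nonneg _) one_pos hS'1
        _ = |S - S'| := div_one _
        _ = |S' - S| := abs_sub_comm _ _
        _ ≤ _ := hSdiff
    calc |f i z / S| * |(S - S') / S'| ≤ 1 * ((2 * (N : ℝ) + 2) * η) :=
          mul_le_mul hb1 hb2 (abs_nonneg _) one_pos.le
      _ = (2 * (N : ℝ) + 2) * η := one_mul _
  calc |f i z' / S' - f i z / S|
      ≤ |(f i z' - f i z) / S'| + |(f i z / S) * ((S - S') / S')| := by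
        rw [key]; exact abs_add_le _ _
    _ ≤ η + (2 * (N : ℝ) + 2) * η := add_le_add h1 h2
    _ = (2 * (N : ℝ) + 3) * η := by ring
end

section
/- Let G be a topological group acting continuously, properly, and by isometries on a metric space X, and suppose the action is smooth (all isotropy groups G_x are open). Then for every x ∈ X there is ε > 0 such that G_x = {g ∈ G : g·B_ε(x) ∩ B_ε(x) ≠ ∅}; in particular G_y ⊆ G_x for every y ∈ B_ε(x). -/
/-- A continuous map is proper if preimages of compact sets are compact. -/
def PropMap {X Y : Type*} [TopologicalSpace X] [TopologicalSpace Y] (f : X → Y) : Prop :=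
  Continuous f ∧ ∀ K : Set Y, IsCompact K → IsCompact (f ⁻¹' K)

/-- For a proper, smooth, isometric action, the stabilizer of `x` consists exactly of
the elements moving some point of a small ball back into that ball; in particular
stabilizers only decrease on a small ball. -/
theorem stabilizer_of_small_ball {G X : Type*} [Group G] [TopologicalSpace G]
    [IsTopologicalGroup G] [LocallyCompactSpace G] [T2Space G]
    [MetricSpace X] [MulAction G X]
    (hcont : Continuous fun p : G × X => p.1 • p.2)
    (hiso : ∀ g : G, Isometry (fun x : X => g • x))
    (hproper : PropMap fun p : G × X => (p.2, p.1 • p.2))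
    (hsmooth : ∀ x : X, IsOpen ((MulAction.stabilizer G x : Set G))) :
    ∀ x : X, ∃ ε > 0,
      (∀ g : G, g ∈ MulAction.stabilizer G x ↔
        ∃ y ∈ Metric.ball x ε, g • y ∈ Metric.ball x ε) ∧
      (∀ y ∈ Metric.ball x ε, MulAction.stabilizer G y ≤ MulAction.stabilizer G x) := by
  intro x
  -- It suffices to find ε such that the "hard" direction of the iff holds.
  suffices h : ∃ ε > 0, ∀ g : G,
      (∃ y ∈ Metric.ball x ε, g • y ∈ Metric.ball x ε) → g ∈ MulAction.stabilizer G x by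
    obtain ⟨ε, hε, h⟩ := h
    refine ⟨ε, hε, ⟨fun g => ⟨fun hg => ⟨x, Metric.mem_ball_self hε, by
      rw [hg]; exact Metric.mem_ball_self hε⟩, h g⟩, ?_⟩⟩
    intro y hy g hg
    exact h g ⟨y, hy, by rw [hg]; exact hy⟩
  by_contra hc
  push_neg at hc
  -- Build sequences gₙ ∉ G_x, yₙ with yₙ, gₙ•yₙ ∈ ball x (1/(n+1)).
  have hseq : ∀ n : ℕ, ∃ g : G, ∃ y : X,
      y ∈ Metric.ball x (1 / (n + 1)) ∧ (g • y) ∈ Metric.ball x (1 / (n + 1)) ∧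
      g ∉ MulAction.stabilizer G x := by
    intro n
    obtain ⟨g, ⟨y, hy, hgy⟩, hg⟩ := hc (1 / (n + 1)) (by positivity)
    exact ⟨g, y, hy, hgy, hg⟩
  choose gs ys hys hgys hgs using hseq
  have hy_tendsto : Filter.Tendsto ys Filter.atTop (nhds x) := by
    rw [Metric.tendsto_atTop]
    intro δ hδ
    obtain ⟨N, hN⟩ := exists_nat_gt (1 / δ)
    refine ⟨N, fun n hn => ?_⟩
    have h1 := hys n
    rw [Metric.mem_ball] at h1
    have : (1 : ℝ) / (n + 1) < δ := by
      rw [div_lt_iff₀ (by positivity)]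
      rw [div_lt_iff₀ hδ] at hN
      calc (1 : ℝ) < N * δ := hN
        _ ≤ δ * (n + 1) := by
            rw [mul_comm]
            have : (N : ℝ) ≤ n + 1 := by exact_mod_cast Nat.le_succ_of_le hn
            nlinarith
    linarith
  have hgy_tendsto : Filter.Tendsto (fun n => gs n • ys n) Filter.atTop (nhds x) := by
    rw [Metric.tendsto_atTop]
    intro δ hδ
    obtain ⟨N, hN⟩ := exists_nat_gt (1 / δ)
    refine ⟨N, fun n hn => ?_⟩
    have h1 := hgys n
    rw [Metric.mem_ball] at h1
    have : (1 : ℝ) / (n + 1) < δ := by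
      rw [div_lt_iff₀ (by positivity)]
      rw [div_lt_iff₀ hδ] at hN
      calc (1 : ℝ) < N * δ := hN
        _ ≤ δ * (n + 1) := by
            rw [mul_comm]
            have : (N : ℝ) ≤ n + 1 := by exact_mod_cast Nat.le_succ_of_le hn
            nlinarith
    linarith
  -- compact set in X × X containing (yₙ, gₙ • yₙ)
  set K : Set (X × X) :=
    (insert x (Set.range ys)) ×ˢ (insert x (Set.range fun n => gs n • ys n)) with hK
  have hKcomp : IsCompact K :=
    (hy_tendsto.isCompact_insert_range).prod (hgy_tendsto.isCompact_insert_range)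
  have hpre : IsCompact ((fun p : G × X => (p.2, p.1 • p.2)) ⁻¹' K) :=
    hproper.2 K hKcomp
  set u : ℕ → G × X := fun n => (gs n, ys n) with hu
  have hmem : ∀ n, u n ∈ (fun p : G × X => (p.2, p.1 • p.2)) ⁻¹' K := by
    intro n
    constructor
    · exact Set.mem_insert_of_mem _ ⟨n, rfl⟩
    · exact Set.mem_insert_of_mem _ ⟨n, rfl⟩
  obtain ⟨p, _, hclust⟩ := hpre.exists_mapClusterPt (f := Filter.atTop) (u := u)
    (Filter.le_principal_iff.2 (Filter.mem_map.2 (Filter.univ_mem' hmem)))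
  obtain ⟨g, y⟩ := p
  -- y is a cluster point of ys; since ys → x, y = x
  have hyclust : MapClusterPt y Filter.atTop ys :=
    hclust.continuousAt_comp (f := Prod.snd) continuousAt_snd
  have hyx : y = x := by
    have h1 : ClusterPt y (nhds x) := hyclust.clusterPt.mono hy_tendsto
    exact eq_of_nhds_neBot h1
  -- g • y is a cluster point of gₙ • yₙ; since gₙ • yₙ → x, g • y = x
  have hgyclust : MapClusterPt (g • y) Filter.atTop (fun n => gs n • ys n) :=
    hclust.continuousAt_comp (f := fun p : G × X => p.1 • p.2) hcont.continuousAt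
  have hgyx : g • y = x := by
    have h1 : ClusterPt (g • y) (nhds x) := hgyclust.clusterPt.mono hgy_tendsto
    exact eq_of_nhds_neBot h1
  have hgstab : g ∈ MulAction.stabilizer G x := by
    rw [MulAction.mem_stabilizer_iff]
    rw [hyx] at hgyx
    exact hgyx
  -- but the stabilizer is open, so gₙ ∈ G_x frequently: contradiction
  have hgclust : MapClusterPt g Filter.atTop gs :=
    hclust.continuousAt_comp (f := Prod.fst) continuousAt_fst
  have hfreq : ∃ᶠ n in Filter.atTop, gs n ∈ (MulAction.stabilizer G x : Set G) :=
    mapClusterPt_iff_frequently.1 hgclust _ ((hsmooth x).mem_nhds hgstab)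
  obtain ⟨n, hn⟩ := hfreq.exists
  exact hgs n hn
end

section
/- Let X be a locally compact metric space with an isometric action of a locally compact Hausdorff group G. Then the action is proper and smooth if and only if every orbit Gx is a discrete subspace of X and every isotropy group G_x is compact. -/
open Metric MulAction Filter Set Topology

section Aux

variable {G X : Type*} [Group G] [TopologicalSpace G] [IsTopologicalGroup G]
  [LocallyCompactSpace G] [T2Space G] [MetricSpace X] [LocallyCompactSpace X] [MulAction G X]

lemma aux_orbitMap_continuous (hcont : Continuous fun p : G × X => p.1 • p.2) (x : X) :
    Continuous fun g : G => g • x :=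
  hcont.comp (continuous_id.prodMk continuous_const)

/-- Discreteness of the orbit gives an isolation radius at the base point. -/
lemma aux_isolated_of_discrete (x : X) (h : DiscreteTopology (orbit G x)) :
    ∃ ε > 0, ∀ g : G, dist (g • x) x < ε → g • x = x := by
  have hx : x ∈ orbit G x := mem_orbit_self x
  have ho : IsOpen ({⟨x, hx⟩} : Set (orbit G x)) := isOpen_discrete _
  rw [isOpen_induced_iff] at ho
  obtain ⟨U, hU, hUeq⟩ := ho
  have hxU : x ∈ U := by
    have : (⟨x, hx⟩ : orbit G x) ∈ (Subtype.val ⁻¹' U : Set (orbit G x)) := by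
      rw [hUeq]; rfl
    exact this
  obtain ⟨ε, hε, hball⟩ := Metric.isOpen_iff.mp hU x hxU
  refine ⟨ε, hε, fun g hg => ?_⟩
  have hgx : g • x ∈ orbit G x := mem_orbit x g
  have hmem : (⟨g • x, hgx⟩ : orbit G x) ∈ (Subtype.val ⁻¹' U : Set (orbit G x)) :=
    hball (by simpa [mem_ball] using hg)
  rw [hUeq] at hmem
  exact congrArg Subtype.val (Set.mem_singleton_iff.mp hmem)

/-- Key compactness lemma: with discrete orbit and compact stabilizer, the set of group
elements moving `x` into a compact set is compact. -/
lemma aux_point_compact (hcont : Continuous fun p : G × X => p.1 • p.2)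
    (hiso : ∀ g : G, Isometry (fun x : X => g • x)) (x : X)
    (hsc : IsCompact ((stabilizer G x : Set G)))
    (hd : DiscreteTopology (orbit G x)) {K : Set X} (hK : IsCompact K) :
    IsCompact {g : G | g • x ∈ K} := by
  obtain ⟨ε, hε, hisol⟩ := aux_isolated_of_discrete x hd
  have hcov : K ⊆ ⋃ z ∈ K, ball z (ε / 3) := fun z hz =>
    mem_biUnion hz (mem_ball_self (by positivity))
  obtain ⟨t, htK, htfin, hcov'⟩ :=
    hK.elim_finite_subcover_image (fun z _ => isOpen_ball) hcov
  have hTcpt : ∀ z : X, IsCompact {g : G | g • x ∈ closedBall z (ε / 3)} := by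
    intro z
    set T := {g : G | g • x ∈ closedBall z (ε / 3)} with hT
    have hTclosed : IsClosed T :=
      isClosed_closedBall.preimage (aux_orbitMap_continuous hcont x)
    by_cases hne : T.Nonempty
    · obtain ⟨g₀, hg₀⟩ := hne
      have hsub : T ⊆ (fun h => g₀ * h) '' (stabilizer G x : Set G) := by
        intro g hg
        have hd1 : dist (g • x) (g₀ • x) < ε := by
          have h1 : dist (g • x) z ≤ ε / 3 := mem_closedBall.mp hg
          have h2 : dist z (g₀ • x) ≤ ε / 3 := by
            rw [dist_comm]; exact mem_closedBall.mp hg₀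
          calc dist (g • x) (g₀ • x) ≤ dist (g • x) z + dist z (g₀ • x) := dist_triangle _ _ _
            _ < ε := by linarith
        have hd2 : dist ((g₀⁻¹ * g) • x) x < ε := by
          have : ((g₀⁻¹ * g) • x) = g₀⁻¹ • (g • x) := by rw [mul_smul]
          have hx : x = g₀⁻¹ • (g₀ • x) := (inv_smul_smul g₀ x).symm
          rw [this]
          calc dist (g₀⁻¹ • (g • x)) x = dist (g₀⁻¹ • (g • x)) (g₀⁻¹ • (g₀ • x)) := by
                rw [← hx]
            _ = dist (g • x) (g₀ • x) := (hiso g₀⁻¹).dist_eq _ _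
            _ < ε := hd1
        have hst : g₀⁻¹ * g ∈ stabilizer G x := mem_stabilizer_iff.mpr (hisol _ hd2)
        exact ⟨g₀⁻¹ * g, hst, by group⟩
      exact (hsc.image (continuous_mul_left g₀)).of_isClosed_subset hTclosed hsub
    · rw [Set.not_nonempty_iff_eq_empty] at hne
      rw [hne]
      exact isCompact_empty
  have hUcpt : IsCompact (⋃ z ∈ t, {g : G | g • x ∈ closedBall z (ε / 3)}) :=
    htfin.isCompact_biUnion fun z _ => hTcpt z
  refine hUcpt.of_isClosed_subset (hK.isClosed.preimage (aux_orbitMap_continuous hcont x)) ?_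
  intro g hg
  obtain ⟨z, hz, hgz⟩ := mem_iUnion₂.mp (hcov' hg)
  exact mem_biUnion hz (ball_subset_closedBall hgz)

/-- Isolation radius from properness and open stabilizers. -/
lemma aux_isolated_of_proper (hcont : Continuous fun p : G × X => p.1 • p.2)
    (hp : PropMap fun p : G × X => (p.2, p.1 • p.2))
    (hop : ∀ x : X, IsOpen ((stabilizer G x : Set G))) (x : X) :
    ∃ ε > 0, ∀ g : G, dist (g • x) x < ε → g • x = x := by
  by_contra hcon
  push_neg at hcon
  have hex : ∀ n : ℕ, ∃ g : G, dist (g • x) x < 1 / (n + 1) ∧ g • x ≠ x := by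
    intro n
    obtain ⟨g, hg1, hg2⟩ := hcon (1 / (n + 1)) (by positivity)
    exact ⟨g, hg1, hg2⟩
  choose g hg hg' using hex
  have hz : Tendsto (fun n : ℕ => g n • x) atTop (𝓝 x) := by
    rw [tendsto_iff_dist_tendsto_zero]
    have h0 : Tendsto (fun n : ℕ => 1 / ((n : ℝ) + 1)) atTop (𝓝 0) :=
      tendsto_one_div_add_atTop_nhds_zero_nat
    exact squeeze_zero (fun n => dist_nonneg) (fun n => (hg n).le) h0
  have hA : IsCompact (insert x (Set.range fun n : ℕ => g n • x)) :=
    hz.isCompact_insert_range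
  set f : G × X → X × X := fun p => (p.2, p.1 • p.2) with hf
  have hL : IsCompact (f ⁻¹' (({x} : Set X) ×ˢ insert x (Set.range fun n : ℕ => g n • x))) :=
    hp.2 _ (isCompact_singleton.prod hA)
  set F : Filter (G × X) := Filter.map (fun n : ℕ => (g n, x)) atTop with hF
  have hFle : F ≤ 𝓟 (f ⁻¹' (({x} : Set X) ×ˢ insert x (Set.range fun n : ℕ => g n • x))) := by
    rw [le_principal_iff, hF, mem_map]
    refine Filter.univ_mem' fun n => ?_
    exact ⟨rfl, Set.mem_insert_of_mem _ ⟨n, rfl⟩⟩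
  obtain ⟨p, hpL, hcp⟩ := hL hFle
  obtain ⟨h, y⟩ := p
  have hy : y = x := hpL.1
  have hcp' : ClusterPt (h, x) F := by rwa [hy] at hcp
  -- h • x = x using cluster point mapped through the action
  have hmc : ClusterPt (h • x) (Filter.map (fun n : ℕ => g n • x) atTop) := by
    have := hcp'.map (x := (h, x)) (f := fun p : G × X => p.1 • p.2)
      hcont.continuousAt (le_of_eq (by rw [hF, Filter.map_map]))
    exact this
  have hhx : h • x = x := by
    refine eq_of_nhds_neBot (NeBot.mono hmc ?_)
    exact inf_le_inf_left _ hz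
  have hst : h ∈ stabilizer G x := mem_stabilizer_iff.mpr hhx
  have hUopen : IsOpen ((stabilizer G x : Set G) ×ˢ (univ : Set X)) :=
    (hop x).prod isOpen_univ
  have hV : ((fun n : ℕ => (g n, x)) '' univ) ∈ F := by
    rw [hF, mem_map]
    exact Filter.univ_mem' fun n => ⟨n, mem_univ n, rfl⟩
  obtain ⟨q, hqU, hqV⟩ := (clusterPt_iff_nonempty.mp hcp')
    (hUopen.mem_nhds ⟨hst, mem_univ _⟩) hV
  obtain ⟨n, -, rfl⟩ := hqV
  exact hg' n (mem_stabilizer_iff.mp hqU.1)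

end Aux

/-- For an isometric action of a locally compact group on a locally compact metric
space: the action is proper and smooth iff all orbits are discrete and all isotropy
groups are compact. -/
theorem proper_smooth_iff_discrete_orbits_compact_stabilizers {G X : Type*} [Group G]
    [TopologicalSpace G] [IsTopologicalGroup G] [LocallyCompactSpace G] [T2Space G]
    [MetricSpace X] [LocallyCompactSpace X] [MulAction G X]
    (hcont : Continuous fun p : G × X => p.1 • p.2)
    (hiso : ∀ g : G, Isometry (fun x : X => g • x)) :
    ((PropMap fun p : G × X => (p.2, p.1 • p.2)) ∧
      (∀ x : X, IsOpen ((MulAction.stabilizer G x : Set G)))) ↔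
    (∀ x : X, DiscreteTopology (MulAction.orbit G x) ∧
      IsCompact ((MulAction.stabilizer G x : Set G))) := by
  constructor
  · rintro ⟨hp, hop⟩ x
    constructor
    · -- discreteness of orbit from isolation at every point
      rw [discreteTopology_iff_isOpen_singleton]
      rintro ⟨y, hy⟩
      obtain ⟨ε, hε, hisol⟩ := aux_isolated_of_proper hcont hp hop y
      rw [isOpen_induced_iff]
      refine ⟨ball y ε, isOpen_ball, ?_⟩
      ext ⟨z, hz⟩
      simp only [mem_preimage, mem_singleton_iff, Subtype.ext_iff]
      constructor
      · intro hzb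
        obtain ⟨gz, rfl⟩ := MulAction.mem_orbit_iff.mp hz
        obtain ⟨gy, rfl⟩ := MulAction.mem_orbit_iff.mp hy
        have key : (gz * gy⁻¹) • (gy • x) = gz • x := by
          rw [smul_smul, inv_mul_cancel_right]
        have : dist ((gz * gy⁻¹) • (gy • x)) (gy • x) < ε := by
          rw [key]; exact hzb
        have := hisol _ this
        rw [key] at this
        exact this
      · rintro h
        rw [h]
        exact mem_ball_self hε
    · -- compact stabilizer from properness
      have hpre : IsCompact ((fun p : G × X => (p.2, p.1 • p.2)) ⁻¹' {(x, x)}) :=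
        hp.2 _ isCompact_singleton
      have heq : (fun p : G × X => (p.2, p.1 • p.2)) ⁻¹' {(x, x)} =
          (MulAction.stabilizer G x : Set G) ×ˢ ({x} : Set X) := by
        ext ⟨gg, yy⟩
        simp only [mem_preimage, mem_singleton_iff, Prod.mk.injEq, Set.mem_prod,
          SetLike.mem_coe, MulAction.mem_stabilizer_iff]
        constructor
        · rintro ⟨rfl, h2⟩; exact ⟨h2, rfl⟩
        · rintro ⟨h1, rfl⟩; exact ⟨rfl, h1⟩
      rw [heq] at hpre
      have himg : Prod.fst '' ((MulAction.stabilizer G x : Set G) ×ˢ ({x} : Set X)) =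
          (MulAction.stabilizer G x : Set G) := by
        ext gg; simp
      rw [← himg]
      exact hpre.image continuous_fst
  · intro h
    constructor
    · -- properness
      refine ⟨continuous_snd.prodMk hcont, fun K hK => ?_⟩
      set f : G × X → X × X := fun p => (p.2, p.1 • p.2) with hfdef
      have hfc : Continuous f := continuous_snd.prodMk hcont
      have hK1 : IsCompact (Prod.fst '' K) := hK.image continuous_fst
      have hK2 : IsCompact (Prod.snd '' K) := hK.image continuous_snd
      obtain ⟨M, hM, hKM⟩ := exists_compact_superset hK2
      obtain ⟨δ, hδ, hth⟩ := hK2.exists_thickening_subset_open isOpen_interior hKM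
      have hcov : Prod.fst '' K ⊆ ⋃ y ∈ Prod.fst '' K, ball y δ := fun y hy =>
        mem_biUnion hy (mem_ball_self hδ)
      obtain ⟨t, htK, htfin, hcov'⟩ :=
        hK1.elim_finite_subcover_image (fun y _ => isOpen_ball) hcov
      have hC : IsCompact (⋃ y ∈ t, {g : G | g • y ∈ M}) :=
        htfin.isCompact_biUnion fun y _ =>
          aux_point_compact hcont hiso y (h y).2 (h y).1 hM
      have hsub : f ⁻¹' K ⊆ (⋃ y ∈ t, {g : G | g • y ∈ M}) ×ˢ (Prod.fst '' K) := by
        rintro ⟨gg, y⟩ hp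
        have hy1 : y ∈ Prod.fst '' K := ⟨(y, gg • y), hp, rfl⟩
        have hy2 : gg • y ∈ Prod.snd '' K := ⟨(y, gg • y), hp, rfl⟩
        obtain ⟨z, hz, hyz⟩ := mem_iUnion₂.mp (hcov' hy1)
        refine ⟨mem_biUnion hz ?_, hy1⟩
        have hde : dist (gg • z) (gg • y) = dist z y := (hiso gg).dist_eq z y
        have hmem : gg • z ∈ Metric.thickening δ (Prod.snd '' K) := by
          rw [Metric.mem_thickening_iff]
          refine ⟨gg • y, hy2, ?_⟩
          rw [hde, dist_comm]
          exact mem_ball.mp hyz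
        have hMm : gg • z ∈ M := interior_subset (hth hmem)
        exact hMm
      exact (hC.prod hK1).of_isClosed_subset (hK.isClosed.preimage hfc) hsub
    · -- open stabilizers
      intro x
      obtain ⟨ε, hε, hisol⟩ := aux_isolated_of_discrete x (h x).1
      refine Subgroup.isOpen_of_mem_nhds (g := (1 : G)) _ ?_
      have hV : IsOpen ((fun g : G => g • x) ⁻¹' ball x ε) :=
        isOpen_ball.preimage (aux_orbitMap_continuous hcont x)
      refine Filter.mem_of_superset (hV.mem_nhds ?_) ?_
      · show (1 : G) • x ∈ ball x ε
        simp [hε]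
      · intro g hg
        exact MulAction.mem_stabilizer_iff.mpr (hisol g (by simpa [mem_ball] using hg))
end

section
/- Let G act properly by isometries on a metric space X such that the action on X is smooth and proper, and let FS(X) be the flow space of generalized geodesics with the induced G-action. Suppose c ∈ FS(X) is periodic, i.e., there exist g ∈ G and t > 0 with gc = Φ_t(c) and gc ≠ c for the minimal such data. Then c is a bi-infinite geodesic (nowhere locally constant), and the set Γ_c = {t ∈ ℝ : ∃ v ∈ G, vc = Φ_t(c)} is a nontrivial discrete subgroup of (ℝ,+), hence infinite cyclic, generated by the period τ_c = min(Γ_c ∩ ℝ_{>0}). -/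
/-- The set of periods of a generalized geodesic: those `t ∈ ℝ` for which some
`v ∈ G` satisfies `v • c = Φ_t(c)`. -/
def periodSet (G : Type*) {X : Type*} [Group G] [MulAction G X] (c : ℝ → X) : Set ℝ :=
  {t : ℝ | ∃ v : G, ∀ s : ℝ, v • c s = c (s + t)}


/-- If `f` is continuous and locally constant to the right of `b`, it is constant on `[b, ∞)`. -/
lemma const_of_locConst_right {Z : Type*} [MetricSpace Z] {f : ℝ → Z} (hf : Continuous f) {b : ℝ}
    (h : ∀ t, b < t → ∃ ε > 0, ∀ s : ℝ, |s - t| < ε → f s = f t) :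
    ∀ s, b ≤ s → f s = f b := by
  intro s₀ hs₀
  rcases eq_or_lt_of_le hs₀ with rfl | hlt
  · rfl
  set A : Set ℝ := {s | s ∈ Set.Icc b s₀ ∧ f s = f s₀} with hA
  have hclosed : IsClosed A := (isClosed_Icc.inter (isClosed_eq hf continuous_const))
  have hne : A.Nonempty := ⟨s₀, ⟨hlt.le, le_refl _⟩, rfl⟩
  have hbdd : BddBelow A := ⟨b, fun y hy => hy.1.1⟩
  have hmem : sInf A ∈ A := hclosed.csInf_mem hne hbdd
  set m := sInf A with hm
  rcases eq_or_lt_of_le hmem.1.1 with hb | hb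
  · rw [← hmem.2, ← hb]
  · exfalso
    obtain ⟨ε, hε, hconst⟩ := h m hb
    set s := max b (m - ε/2) with hs
    have hsm : s < m := max_lt hb (by linarith)
    have hsa : |s - m| < ε := by
      rw [abs_of_nonpos (by linarith)]
      have : m - ε/2 ≤ s := le_max_right _ _
      linarith
    have hsA : s ∈ A := ⟨⟨le_max_left _ _, le_trans hsm.le hmem.1.2⟩,
      by rw [hconst s hsa, hmem.2]⟩
    exact absurd (csInf_le hbdd hsA) (not_le.2 hsm)

/-- If `f` is continuous and locally constant to the left of `b`, it is constant on `(-∞, b]`. -/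
lemma const_of_locConst_left {Z : Type*} [MetricSpace Z] {f : ℝ → Z} (hf : Continuous f) {b : ℝ}
    (h : ∀ t, t < b → ∃ ε > 0, ∀ s : ℝ, |s - t| < ε → f s = f t) :
    ∀ s, s ≤ b → f s = f b := by
  have := const_of_locConst_right (f := fun x => f (-x)) (hf.comp continuous_neg) (b := -b) ?_
  · intro s hs
    have h1 := this (-s) (by linarith)
    simpa using h1
  · intro t ht
    obtain ⟨ε, hε, hconst⟩ := h (-t) (by linarith)
    exact ⟨ε, hε, fun s hs => hconst (-s) (by rw [← abs_neg]; convert hs using 2; ring)⟩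

lemma biinfinite {G X : Type*} [Group G] [MetricSpace X] [MulAction G X]
    (hiso : ∀ g : G, Isometry (fun x : X => g • x))
    {c : ℝ → X} (hcc : Continuous c) {I : Set ℝ}
    (hItype : (∃ a b : ℝ, a ≤ b ∧ I = Set.Icc a b) ∨ (∃ a : ℝ, I = Set.Ici a) ∨
      (∃ b : ℝ, I = Set.Iic b) ∨ I = Set.univ)
    (hgeo : ∀ s ∈ I, ∀ t ∈ I, dist (c s) (c t) = |s - t|)
    (hloc : ∀ t ∉ I, ∃ ε > 0, ∀ s : ℝ, |s - t| < ε → c s = c t)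
    {g : G} {t₀ : ℝ} (ht₀ : 0 < t₀) (hg : ∀ s : ℝ, g • c s = c (s + t₀))
    (hne : ∃ s : ℝ, g • c s ≠ c s) :
    ∀ s t : ℝ, dist (c s) (c t) = |s - t| := by
  have hshift : ∀ s t : ℝ, dist (c (s + t₀)) (c (t + t₀)) = dist (c s) (c t) := by
    intro s t
    rw [← hg, ← hg]
    exact (hiso g).dist_eq (c s) (c t)
  rcases hItype with ⟨a, b, hab, rfl⟩ | ⟨a, rfl⟩ | ⟨b, rfl⟩ | rfl
  · -- Icc case
    exfalso
    have hR : ∀ s, b ≤ s → c s = c b := by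
      apply const_of_locConst_right hcc
      intro t ht
      exact hloc t (fun hm => absurd hm.2 (not_le.2 ht))
    have hL : ∀ s, s ≤ a → c s = c a := by
      apply const_of_locConst_left hcc
      intro t ht
      exact hloc t (fun hm => absurd hm.1 (not_le.2 ht))
    rcases eq_or_lt_of_le hab with rfl | hlt
    · obtain ⟨s, hs⟩ := hne
      have hconst : ∀ u : ℝ, c u = c a := fun u => by
        rcases le_total u a with h | h
        · exact hL u h
        · exact hR u h
      exact hs (by rw [hg, hconst (s + t₀), hconst s])
    · set s := max a (b - t₀) with hs
      have hs_lt : s < b := max_lt hlt (by linarith)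
      have h1 : dist (c s) (c b) = |s - b| :=
        hgeo s ⟨le_max_left _ _, hs_lt.le⟩ b ⟨hab, le_refl _⟩
      have h2 : c (s + t₀) = c b := by
        have : b - t₀ ≤ s := le_max_right _ _
        exact hR _ (by linarith)
      have h3 : c (b + t₀) = c b := hR _ (by linarith)
      have h4 := hshift s b
      rw [h2, h3, dist_self, h1] at h4
      have := abs_eq_zero.1 h4.symm
      linarith [this, hs_lt]
  · -- Ici case
    exfalso
    have hL : ∀ s, s ≤ a → c s = c a := by
      apply const_of_locConst_left hcc
      intro t ht
      exact hloc t (fun hm => absurd hm (not_le.2 ht))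
    have h4 := hshift (a - t₀) a
    have e1 : a - t₀ + t₀ = a := by ring
    rw [e1, hL (a - t₀) (by linarith), dist_self] at h4
    have h1 : dist (c a) (c (a + t₀)) = |a - (a + t₀)| :=
      hgeo a (le_refl a) (a + t₀) (by simp; linarith)
    rw [h1] at h4
    have : |a - (a + t₀)| = t₀ := by rw [abs_sub_comm]; simp [abs_of_pos ht₀]
    linarith [this, h4]
  · -- Iic case
    exfalso
    have hR : ∀ s, b ≤ s → c s = c b := by
      apply const_of_locConst_right hcc
      intro t ht
      exact hloc t (fun hm => absurd hm (not_le.2 ht))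
    have h4 := hshift (b - t₀) b
    have e1 : b - t₀ + t₀ = b := by ring
    rw [e1, hR (b + t₀) (by linarith), dist_self] at h4
    have h1 : dist (c (b - t₀)) (c b) = |b - t₀ - b| :=
      hgeo (b - t₀) (by simp; linarith) b (le_refl b)
    rw [h1] at h4
    have : |b - t₀ - b| = t₀ := by rw [abs_sub_comm]; simp [abs_of_pos ht₀]
    linarith [this, h4]
  · exact fun s t => hgeo s trivial t trivial

open Filter Topology in
lemma periodSet_structure {G X : Type*} [Group G] [TopologicalSpace G]
    [IsTopologicalGroup G] [LocallyCompactSpace G] [T2Space G]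
    [MetricSpace X] [MulAction G X]
    (hcont : Continuous fun p : G × X => p.1 • p.2)
    (hproper : Continuous (fun p : G × X => (p.2, p.1 • p.2)) ∧
      ∀ K : Set (X × X), IsCompact K → IsCompact ((fun p : G × X => (p.2, p.1 • p.2)) ⁻¹' K))
    (hsmooth : ∀ x : X, IsOpen ((MulAction.stabilizer G x : Set G)))
    (c : ℝ → X) (hcc : Continuous c)
    (hbi : ∀ s t : ℝ, dist (c s) (c t) = |s - t|)
    {g₀ : G} {t₀ : ℝ} (ht₀ : 0 < t₀) (hg₀ : ∀ s : ℝ, g₀ • c s = c (s + t₀)) :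
    ∃ T : ℝ, 0 < T ∧ IsLeast {t : ℝ | 0 < t ∧ t ∈ periodSet G c} T ∧
      periodSet G c = {r : ℝ | ∃ n : ℤ, r = n * T} := by
  classical
  -- periodSet is an additive subgroup of ℝ
  set S : AddSubgroup ℝ :=
    { carrier := periodSet G c
      zero_mem' := ⟨1, fun s => by simp⟩
      add_mem' := by
        rintro a b ⟨v, hv⟩ ⟨w, hw⟩
        exact ⟨v * w, fun s => by
          rw [mul_smul, hw, hv]; congr 1; ring⟩
      neg_mem' := by
        rintro a ⟨v, hv⟩
        refine ⟨v⁻¹, fun s => ?_⟩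
        have h1 : v • c (s + -a) = c s := by rw [hv]; congr 1; ring
        calc v⁻¹ • c s = v⁻¹ • (v • c (s + -a)) := by rw [h1]
          _ = c (s + -a) := inv_smul_smul v _ } with hSdef
  have hSmem : ∀ r : ℝ, r ∈ S ↔ r ∈ periodSet G c := fun r => Iff.rfl
  -- the gap at zero
  have hgap : ∃ ε > 0, ∀ t ∈ periodSet G c, 0 < t → ε ≤ t := by
    by_contra hcon
    push_neg at hcon
    set x := c 0 with hx
    -- the compact set containing all "small translation" elements
    have hKc : IsCompact (({x} : Set X) ×ˢ (c '' Set.Icc (0:ℝ) 1)) :=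
      isCompact_singleton.prod (isCompact_Icc.image hcc)
    have hQ := hproper.2 _ hKc
    have hA : IsCompact ((fun p : G × X => (p.2, p.1 • p.2)) ⁻¹' (({x} : Set X) ×ˢ (c '' Set.Icc (0:ℝ) 1))
        ∩ (Prod.snd ⁻¹' ({x} : Set X))) :=
      hQ.inter_right (isClosed_singleton.preimage continuous_snd)
    set S0 : Set G := Prod.fst '' ((fun p : G × X => (p.2, p.1 • p.2)) ⁻¹' (({x} : Set X) ×ˢ (c '' Set.Icc (0:ℝ) 1))
        ∩ (Prod.snd ⁻¹' ({x} : Set X))) with hS0def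
    have hS0 : IsCompact S0 := hA.image continuous_fst
    -- sets of elements realizing small periods
    set Sset : {e : ℝ // 0 < e} → Set G :=
      fun ε => {h : G | ∃ t : ℝ, 0 < t ∧ t ≤ ε.1 ∧ ∀ s : ℝ, h • c s = c (s + t)} with hSsetdef
    have hSne : ∀ ε, (Sset ε).Nonempty := by
      rintro ⟨ε, hε⟩
      obtain ⟨t, ht, htpos, htlt⟩ := hcon ε hε
      obtain ⟨v, hv⟩ := ht
      exact ⟨v, t, htpos, htlt.le, hv⟩
    set F : Filter G := ⨅ ε : {e : ℝ // 0 < e}, 𝓟 (Sset ε) with hFdef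
    have hdir : Directed (· ≥ ·) fun ε : {e : ℝ // 0 < e} => 𝓟 (Sset ε) := by
      rintro ⟨ε₁, h₁⟩ ⟨ε₂, h₂⟩
      refine ⟨⟨min ε₁ ε₂, lt_min h₁ h₂⟩, ?_, ?_⟩ <;>
        exact principal_mono.2 (fun h => fun ⟨t, htp, htl, hts⟩ =>
          ⟨t, htp, htl.trans (by simp [min_le_left, min_le_right]), hts⟩)
    have hFne : F.NeBot := by
      refine iInf_neBot_of_directed hdir ?_
      intro ε
      exact principal_neBot_iff.2 (hSne ε)
    have hmemF : ∀ ε : {e : ℝ // 0 < e}, Sset ε ∈ F :=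
      fun ε => mem_iInf_of_mem ε (mem_principal_self _)
    have hsub : Sset ⟨1, one_pos⟩ ⊆ S0 := by
      rintro h ⟨t, htp, htl, hts⟩
      refine ⟨(h, x), ⟨?_, rfl⟩, rfl⟩
      constructor
      · exact rfl
      · show h • x ∈ c '' Set.Icc 0 1
        have : h • x = c t := by rw [hx]; rw [hts 0, zero_add]
        rw [this]
        exact ⟨t, ⟨htp.le, htl⟩, rfl⟩
    have hle : F ≤ 𝓟 S0 := le_trans (iInf_le _ ⟨1, one_pos⟩) (principal_mono.2 hsub)
    obtain ⟨v, hvS0, hv⟩ := hS0.exists_clusterPt hle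
    -- v fixes x
    have hφ : Continuous fun h : G => h • x :=
      hcont.comp (continuous_id.prodMk continuous_const)
    have hdistx : ∀ (h : G) (t : ℝ), 0 < t → (∀ s : ℝ, h • c s = c (s + t)) →
        h • x = c t ∧ dist (h • x) x = t := by
      intro h t htp hts
      have h1 : h • x = c t := by rw [hx, hts 0, zero_add]
      refine ⟨h1, ?_⟩
      rw [h1, hx, hbi t 0]
      simp [abs_of_pos htp]
    have hvx : v • x = x := by
      by_contra hne'
      have hd0 : 0 < dist (v • x) x := dist_pos.2 hne'
      set d := dist (v • x) x with hd
      have hU : {h : G | dist (h • x) (v • x) < d/2} ∈ 𝓝 v := by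
        have : IsOpen {h : G | dist (h • x) (v • x) < d/2} :=
          isOpen_lt (continuous_dist.comp (hφ.prodMk continuous_const)) continuous_const
        exact this.mem_nhds (by simp [hd0, div_pos hd0])
      have hS4 : Sset ⟨d/4, by linarith⟩ ∈ F := hmemF _
      have hnon : ({h : G | dist (h • x) (v • x) < d/2} ∩ Sset ⟨d/4, by linarith⟩).Nonempty := by
        have : ({h : G | dist (h • x) (v • x) < d/2} ∩ Sset ⟨d/4, by linarith⟩) ∈ 𝓝 v ⊓ F :=
          inter_mem (mem_inf_of_left hU) (mem_inf_of_right hS4)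
        exact hv.nonempty_of_mem this
      obtain ⟨h, hh1, t, htp, htl, hts⟩ := hnon
      obtain ⟨-, hh3⟩ := hdistx h t htp hts
      have : d ≤ dist (v • x) (h • x) + dist (h • x) x := dist_triangle _ _ _
      rw [dist_comm (v • x) (h • x)] at this
      simp only [Set.mem_setOf_eq] at hh1
      linarith
    -- v is in the open stabilizer; cluster gives a contradiction
    have hstab : (MulAction.stabilizer G x : Set G) ∈ 𝓝 v :=
      (hsmooth x).mem_nhds (MulAction.mem_stabilizer_iff.2 hvx)
    have hnon : ((MulAction.stabilizer G x : Set G) ∩ Sset ⟨1, one_pos⟩).Nonempty := by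
      have : ((MulAction.stabilizer G x : Set G) ∩ Sset ⟨1, one_pos⟩) ∈ 𝓝 v ⊓ F :=
        inter_mem (mem_inf_of_left hstab) (mem_inf_of_right (hmemF _))
      exact hv.nonempty_of_mem this
    obtain ⟨h, hh1, t, htp, htl, hts⟩ := hnon
    obtain ⟨hh2, hh3⟩ := hdistx h t htp hts
    have : h • x = x := hh1
    rw [this, dist_self] at hh3
    linarith
  -- conclude with the classification of discrete subgroups of ℝ
  obtain ⟨ε, hε, hgap'⟩ := hgap
  have hbotS : S ≠ ⊥ := by
    intro hbot
    have ht₀S : t₀ ∈ S := ⟨g₀, hg₀⟩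
    rw [hbot, AddSubgroup.mem_bot] at ht₀S
    linarith
  have hdisj : Disjoint (S : Set ℝ) (Set.Ioo 0 ε) :=
    Set.disjoint_left.2 fun t ht hts => absurd (hgap' t ht hts.1) (not_le.2 hts.2)
  obtain ⟨T, hT⟩ := AddSubgroup.exists_isLeast_pos hbotS hε hdisj
  have hT0 : 0 < T := hT.1.2
  have hcyc : S = AddSubgroup.closure {T} := AddSubgroup.cyclic_of_min hT
  refine ⟨T, hT0, ⟨⟨hT0, hT.1.1⟩, fun t ht => hT.2 ⟨ht.2, ht.1⟩⟩, ?_⟩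
  ext r
  constructor
  · intro hr
    have : r ∈ AddSubgroup.closure ({T} : Set ℝ) := hcyc ▸ ((hSmem r).2 hr)
    obtain ⟨n, hn⟩ := AddSubgroup.mem_closure_singleton.1 this
    exact ⟨n, by rw [← hn, zsmul_eq_mul]⟩
  · rintro ⟨n, rfl⟩
    have : (n : ℤ) • T ∈ AddSubgroup.closure ({T} : Set ℝ) :=
      AddSubgroup.zsmul_mem _ (AddSubgroup.mem_closure_singleton.2 ⟨1, one_smul ℤ T⟩) n
    rw [← hcyc] at this
    have h2 : ((n : ℝ) * T : ℝ) ∈ S := by rwa [← zsmul_eq_mul]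
    exact (hSmem _).1 h2

/-- A periodic generalized geodesic for a proper, smooth, isometric action is a
bi-infinite geodesic, and its set of periods is an infinite cyclic discrete subgroup
of `ℝ` generated by the minimal positive period. -/
theorem periodic_geodesic_structure {G X : Type*} [Group G] [TopologicalSpace G]
    [IsTopologicalGroup G] [LocallyCompactSpace G] [T2Space G]
    [MetricSpace X] [MulAction G X]
    (hcont : Continuous fun p : G × X => p.1 • p.2)
    (hiso : ∀ g : G, Isometry (fun x : X => g • x))
    (hproper : PropMap fun p : G × X => (p.2, p.1 • p.2))
    (hsmooth : ∀ x : X, IsOpen ((MulAction.stabilizer G x : Set G)))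
    (c : ℝ → X) (hc : IsGenGeodesic c)
    (hper : ∃ (g : G) (t : ℝ), 0 < t ∧ (∀ s : ℝ, g • c s = c (s + t)) ∧
      (∃ s : ℝ, g • c s ≠ c s)) :
    (∀ s t : ℝ, dist (c s) (c t) = |s - t|) ∧
    ∃ T : ℝ, 0 < T ∧ IsLeast {t : ℝ | 0 < t ∧ t ∈ periodSet G c} T ∧
      periodSet G c = {r : ℝ | ∃ n : ℤ, r = n * T} := by
  obtain ⟨hcc, I, hItype, hgeo, hloc⟩ := hc
  obtain ⟨g₀, t₀, ht₀, hg₀, hne⟩ := hper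
  have hbi : ∀ s t : ℝ, dist (c s) (c t) = |s - t| :=
    biinfinite hiso hcc hItype hgeo hloc ht₀ hg₀ hne
  exact ⟨hbi, periodSet_structure hcont hproper hsmooth c hcc hbi ht₀ hg₀⟩
end

section
/- Let X be a complete CAT(0) space with base point b, let c_{b,x} denote the generalized geodesic from b to x (constant equal to b on (−∞,0], equal to the geodesic from b to x on [0, d(b,x)], constant equal to x afterwards). For every δ > 0 choose Δ > 0 with ∫_Δ^∞ s/(2e^s) ds < δ. Then for all R', T with R' ≥ T + Δ and all x ∈ X, d_FS(Φ_T(c_{b,x}), Φ_T(c_{b,π_{R'}(x)})) < δ, where π_{R'} is the radial projection of X onto the closed ball of radius R' around b. -/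
open MeasureTheory

/-- A CAT(0) space: a geodesic metric space satisfying the CN (Bruhat–Tits)
inequality for midpoints. -/
def IsCAT0 (X : Type*) [MetricSpace X] : Prop :=
  (∀ x y : X, ∃ γ : ℝ → X, γ 0 = x ∧ γ (dist x y) = y ∧
    ∀ s ∈ Set.Icc 0 (dist x y), ∀ t ∈ Set.Icc 0 (dist x y),
      dist (γ s) (γ t) = |s - t|) ∧
  (∀ x y z m : X, dist y m = dist y z / 2 → dist m z = dist y z / 2 →
    dist x m ^ 2 ≤ (dist x y ^ 2 + dist x z ^ 2) / 2 - dist y z ^ 2 / 4)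

section Aux

variable {X : Type*} [MetricSpace X]

/-- The geodesics `c x` are 1-Lipschitz. -/
lemma cx_lipschitz (b x : X) (c : X → ℝ → X)
    (h1 : ∀ t ≤ (0 : ℝ), c x t = b) (h2 : ∀ t ≥ dist b x, c x t = x)
    (h3 : ∀ s ∈ Set.Icc 0 (dist b x), ∀ t ∈ Set.Icc 0 (dist b x),
      dist (c x s) (c x t) = |s - t|) :
    ∀ s t : ℝ, dist (c x s) (c x t) ≤ |s - t| := by
  have hd : (0 : ℝ) ≤ dist b x := dist_nonneg
  have clamp_mem : ∀ s : ℝ, max 0 (min s (dist b x)) ∈ Set.Icc 0 (dist b x) :=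
    fun s => ⟨le_max_left _ _, max_le hd (min_le_right _ _)⟩
  have key : ∀ s : ℝ, c x s = c x (max 0 (min s (dist b x))) := by
    intro s
    rcases le_or_gt s 0 with h | h
    · rw [h1 s h, min_eq_left (h.trans hd), max_eq_left h, h1 0 le_rfl]
    · rcases le_or_gt s (dist b x) with h' | h'
      · rw [min_eq_left h', max_eq_right h.le]
      · rw [min_eq_right h'.le, max_eq_right hd, h2 s h'.le, h2 _ le_rfl]
  intro s t
  rw [key s, key t, h3 _ (clamp_mem s) _ (clamp_mem t)]
  calc |max 0 (min s (dist b x)) - max 0 (min t (dist b x))|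
      = |max (min s (dist b x)) 0 - max (min t (dist b x)) 0| := by rw [max_comm, max_comm 0]
    _ ≤ |min s (dist b x) - min t (dist b x)| := abs_max_sub_max_le_abs _ _ _
    _ ≤ max |s - t| |dist b x - dist b x| := abs_min_sub_min_le_max _ _ _ _
    _ ≤ |s - t| := by simp

/-- Uniqueness of geodesics in CAT(0): the geodesic to an intermediate point
of `c x` coincides with `c x` on the common interval. -/
lemma geo_eq (hX : IsCAT0 X) (b : X) (c : X → ℝ → X)
    (hc : ∀ x : X, (∀ t ≤ (0 : ℝ), c x t = b) ∧ (∀ t ≥ dist b x, c x t = x) ∧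
      ∀ s ∈ Set.Icc 0 (dist b x), ∀ t ∈ Set.Icc 0 (dist b x),
        dist (c x s) (c x t) = |s - t|)
    (x : X) (m0 : ℝ) (hm : m0 ∈ Set.Icc 0 (dist b x)) :
    ∀ s ∈ Set.Icc 0 m0, c (c x m0) s = c x s := by
  obtain ⟨hx1, hx2, hx3⟩ := hc x
  set y := c x m0 with hy
  have cb0 : c x 0 = b := hx1 0 le_rfl
  have hd : (0 : ℝ) ≤ dist b x := dist_nonneg
  have dby : dist b y = m0 := by
    have := hx3 0 ⟨le_rfl, hd⟩ m0 hm
    rw [cb0] at this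
    rw [this, abs_of_nonpos (by linarith [hm.1] : (0:ℝ) - m0 ≤ 0)]
    ring
  obtain ⟨hy1, hy2, hy3⟩ := hc y
  rw [dby] at hy2 hy3
  intro s hs
  have hsx : s ∈ Set.Icc 0 (dist b x) := ⟨hs.1, hs.2.trans hm.2⟩
  have dbq : dist b (c x s) = s := by
    have := hx3 0 ⟨le_rfl, hd⟩ s hsx
    rw [cb0] at this
    rw [this, abs_of_nonpos (by linarith [hs.1] : (0:ℝ) - s ≤ 0)]; ring
  have dqy : dist (c x s) y = m0 - s := by
    have := hx3 s hsx m0 hm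
    rw [this, abs_of_nonpos (by linarith [hs.2] : s - m0 ≤ 0)]; ring
  have cyb0 : c y 0 = b := hy1 0 le_rfl
  have dbp : dist b (c y s) = s := by
    have := hy3 0 ⟨le_rfl, hm.1⟩ s hs
    rw [cyb0] at this
    rw [this, abs_of_nonpos (by linarith [hs.1] : (0:ℝ) - s ≤ 0)]; ring
  have cym : c y m0 = y := hy2 m0 le_rfl
  have dpy : dist (c y s) y = m0 - s := by
    have := hy3 s hs m0 ⟨hm.1, le_rfl⟩
    rw [cym] at this
    rw [this, abs_of_nonpos (by linarith [hs.2] : s - m0 ≤ 0)]; ring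
  -- midpoint of p := c y s and q := c x s
  obtain ⟨γ, hγ0, hγd, hγiso⟩ := hX.1 (c y s) (c x s)
  set e := dist (c y s) (c x s) with he
  have he0 : 0 ≤ e := dist_nonneg
  set m := γ (e / 2) with hm'
  have dpm : dist (c y s) m = e / 2 := by
    have := hγiso 0 ⟨le_rfl, he0⟩ (e / 2) ⟨by linarith, by linarith⟩
    rw [hγ0] at this
    rw [this, abs_of_nonpos (by linarith : (0:ℝ) - e / 2 ≤ 0)]; ring
  have dmq : dist m (c x s) = e / 2 := by
    have := hγiso (e / 2) ⟨by linarith, by linarith⟩ e ⟨he0, le_rfl⟩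
    rw [hγd] at this
    rw [this, abs_of_nonpos (by linarith : e / 2 - e ≤ 0)]; ring
  have CN1 := hX.2 b (c y s) (c x s) m dpm dmq
  have CN2 := hX.2 y (c y s) (c x s) m dpm dmq
  rw [dbp, dbq, ← he] at CN1
  rw [dist_comm y (c y s), dpy, dist_comm y (c x s), dqy, ← he] at CN2
  by_contra hne
  have hepos : 0 < e := dist_pos.2 fun h => hne h
  have hbm : dist b m < s := by
    refine lt_of_pow_lt_pow_left₀ 2 hs.1 ?_
    nlinarith
  have hmy : dist y m < m0 - s := by
    refine lt_of_pow_lt_pow_left₀ 2 (by linarith [hs.2]) ?_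
    nlinarith
  have tri : dist b y ≤ dist b m + dist m y := dist_triangle b m y
  rw [dby, dist_comm m y] at tri
  linarith

/-- Pointwise distance bound between `c x` and the geodesic to the intermediate
point `c x m0`. -/
lemma dist_bound (hX : IsCAT0 X) (b : X) (c : X → ℝ → X)
    (hc : ∀ x : X, (∀ t ≤ (0 : ℝ), c x t = b) ∧ (∀ t ≥ dist b x, c x t = x) ∧
      ∀ s ∈ Set.Icc 0 (dist b x), ∀ t ∈ Set.Icc 0 (dist b x),
        dist (c x s) (c x t) = |s - t|)
    (x : X) (m0 : ℝ) (hm : m0 ∈ Set.Icc 0 (dist b x)) (t : ℝ) :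
    dist (c x t) (c (c x m0) t) ≤ max (t - m0) 0 := by
  obtain ⟨hx1, hx2, hx3⟩ := hc x
  set y := c x m0 with hy
  have cb0 : c x 0 = b := hx1 0 le_rfl
  have hd : (0 : ℝ) ≤ dist b x := dist_nonneg
  have dby : dist b y = m0 := by
    have := hx3 0 ⟨le_rfl, hd⟩ m0 hm
    rw [cb0] at this
    rw [this, abs_of_nonpos (by linarith [hm.1] : (0:ℝ) - m0 ≤ 0)]; ring
  obtain ⟨hy1, hy2, _⟩ := hc y
  rcases le_or_gt t m0 with h | h
  · rcases le_or_gt t 0 with h0 | h0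
    · rw [hx1 t h0, hy1 t h0, dist_self]
      exact le_max_right _ _
    · rw [geo_eq hX b c hc x m0 hm t ⟨h0.le, h⟩, dist_self]
      exact le_max_right _ _
  · have hyt : c y t = y := hy2 t (by rw [dby]; exact h.le)
    rw [hyt]
    calc dist (c x t) y = dist (c x t) (c x m0) := rfl
      _ ≤ |t - m0| := cx_lipschitz b x c hx1 hx2 hx3 t m0
      _ = t - m0 := abs_of_pos (by linarith)
      _ ≤ max (t - m0) 0 := le_max_left _ _

end Aux

/-- Flowed generalized geodesics from the basepoint to `x` and to its radial
projection `π_{R'}(x)` are `δ`-close provided `R' ≥ T + Δ`. -/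
theorem radial_projection_estimate {X : Type*} [MetricSpace X] [CompleteSpace X]
    (hX : IsCAT0 X) (b : X)
    (c : X → ℝ → X)
    (hc : ∀ x : X, (∀ t ≤ (0 : ℝ), c x t = b) ∧ (∀ t ≥ dist b x, c x t = x) ∧
      ∀ s ∈ Set.Icc 0 (dist b x), ∀ t ∈ Set.Icc 0 (dist b x),
        dist (c x s) (c x t) = |s - t|)
    (π : ℝ → X → X)
    (hπ : ∀ (R : ℝ) (x : X), π R x = c x (min R (dist b x)))
    (δ : ℝ) (hδ : 0 < δ) (Δ : ℝ) (hΔ : 0 < Δ)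
    (hint : ∫ s in Set.Ioi Δ, s / (2 * Real.exp s) < δ) :
    ∀ R' T : ℝ, R' ≥ T + Δ → ∀ x : X,
      dFS (flowFS (c x) T) (flowFS (c (π R' x)) T) < δ := by
  intro R' T hRT x
  -- integrability of the dominating function
  have hgint : IntegrableOn (fun s : ℝ => s / (2 * Real.exp s)) (Set.Ioi Δ) := by
    have hΓ : IntegrableOn (fun s : ℝ => Real.exp (-s) * s ^ ((2:ℝ) - 1)) (Set.Ioi 0) :=
      Real.GammaIntegral_convergent (by norm_num)
    have h1 : IntegrableOn (fun s : ℝ => Real.exp (-s) * s ^ ((2:ℝ) - 1)) (Set.Ioi Δ) :=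
      hΓ.mono_set (Set.Ioi_subset_Ioi hΔ.le)
    have h2 : IntegrableOn (fun s : ℝ => (1/2 : ℝ) * (Real.exp (-s) * s ^ ((2:ℝ) - 1)))
        (Set.Ioi Δ) := h1.const_mul _
    refine h2.congr_fun ?_ measurableSet_Ioi
    intro s _
    have hes : Real.exp s ≠ 0 := (Real.exp_pos s).ne'
    show (1/2 : ℝ) * (Real.exp (-s) * s ^ ((2:ℝ) - 1)) = s / (2 * Real.exp s)
    rw [show ((2:ℝ) - 1) = 1 by norm_num, Real.rpow_one, Real.exp_neg]
    field_simp
  rcases lt_or_ge (dist b x) R' with hcase | hcase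
  · -- projection is the identity
    have hpi : π R' x = x := by
      rw [hπ, min_eq_right hcase.le, (hc x).2.1 _ le_rfl]
    rw [hpi]
    have : dFS (flowFS (c x) T) (flowFS (c x) T) = 0 := by
      simp [dFS, flowFS]
    rw [this]; exact hδ
  · -- main case
    set m0 := max 0 R' with hm0
    have hd : (0 : ℝ) ≤ dist b x := dist_nonneg
    have hm : m0 ∈ Set.Icc 0 (dist b x) := ⟨le_max_left _ _, max_le hd hcase⟩
    have hpi : π R' x = c x m0 := by
      rw [hπ, min_eq_left hcase]
      rw [hm0]
      rcases le_or_gt 0 R' with h | h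
      · rw [max_eq_right h]
      · rw [max_eq_left h.le, (hc x).1 R' h.le, (hc x).1 0 le_rfl]
    rw [hpi]
    set G : ℝ → ℝ := fun t => dist (c x (t + T)) (c (c x m0) (t + T)) / (2 * Real.exp |t|)
      with hG
    have hRm0 : R' ≤ m0 := le_max_right _ _
    have hGbound : ∀ t : ℝ, G t ≤ max (t + T - m0) 0 / (2 * Real.exp |t|) := by
      intro t
      have h0 := dist_bound hX b c hc x m0 hm (t + T)
      have hpos : 0 < 2 * Real.exp |t| := by positivity
      exact (div_le_div_iff_of_pos_right hpos).2 h0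
    have hGnonneg : ∀ t : ℝ, 0 ≤ G t := fun t => by
      have : 0 < 2 * Real.exp |t| := by positivity
      exact div_nonneg dist_nonneg this.le
    have hGzero : ∀ t ≤ Δ, G t = 0 := by
      intro t ht
      have h1 : max (t + T - m0) 0 = 0 := by
        rw [max_eq_right]; linarith
      have h2 : G t ≤ 0 := by simpa [h1] using hGbound t
      linarith [hGnonneg t]
    have hGcont : Continuous G := by
      have hlx : Continuous (c x) := by
        have := cx_lipschitz b x c (hc x).1 (hc x).2.1 (hc x).2.2
        refine LipschitzWith.continuous (K := 1) ?_
        refine LipschitzWith.of_dist_le_mul fun s t => ?_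
        simpa [Real.dist_eq] using this s t
      have hly : Continuous (c (c x m0)) := by
        have := cx_lipschitz b (c x m0) c (hc _).1 (hc _).2.1 (hc _).2.2
        refine LipschitzWith.continuous (K := 1) ?_
        refine LipschitzWith.of_dist_le_mul fun s t => ?_
        simpa [Real.dist_eq] using this s t
      have hadd : Continuous fun t : ℝ => t + T := continuous_add_right T
      have h1 : Continuous fun t : ℝ => dist (c x (t + T)) (c (c x m0) (t + T)) :=
        Continuous.dist (hlx.comp hadd) (hly.comp hadd)
      have h2 : Continuous fun t : ℝ => 2 * Real.exp |t| :=
        continuous_const.mul (Real.continuous_exp.comp continuous_abs)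
      exact h1.div h2 fun t => by positivity
    have hGle : ∀ t ∈ Set.Ioi Δ, G t ≤ t / (2 * Real.exp t) := by
      intro t ht
      have htΔ : Δ < t := ht
      have habs : |t| = t := abs_of_pos (hΔ.trans htΔ)
      have h1 : max (t + T - m0) 0 ≤ t := by
        apply max_le _ (by linarith)
        linarith
      calc G t ≤ max (t + T - m0) 0 / (2 * Real.exp |t|) := hGbound t
        _ ≤ t / (2 * Real.exp |t|) := by
            apply div_le_div_of_nonneg_right ?_ (by positivity) |>.trans_eq rfl
            exact h1
        _ = t / (2 * Real.exp t) := by rw [habs]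
    have hGint : IntegrableOn G (Set.Ioi Δ) := by
      refine Integrable.mono (hgint) (hGcont.aestronglyMeasurable.restrict) ?_
      refine (ae_restrict_iff' measurableSet_Ioi).2 (ae_of_all _ fun t ht => ?_)
      have h1 : 0 ≤ t / (2 * Real.exp t) := by
        have : (0:ℝ) < t := hΔ.trans ht
        positivity
      rw [Real.norm_of_nonneg (hGnonneg t), Real.norm_of_nonneg h1]
      exact hGle t ht
    have hdfs : dFS (flowFS (c x) T) (flowFS (c (c x m0)) T) = ∫ t in Set.Ioi Δ, G t := by
      rw [show dFS (flowFS (c x) T) (flowFS (c (c x m0)) T) = ∫ t : ℝ, G t from rfl]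
      rw [← setIntegral_eq_integral_of_forall_compl_eq_zero
        (fun t (ht : t ∉ Set.Ioi Δ) => hGzero t (by simpa using ht))]
    rw [hdfs]
    calc ∫ t in Set.Ioi Δ, G t
        ≤ ∫ t in Set.Ioi Δ, t / (2 * Real.exp t) :=
          setIntegral_mono_on hGint hgint measurableSet_Ioi hGle
      _ < δ := hint
end
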